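/- arXiv:1303.1060 — 11 statements merged into one kernel-verified Lean document; each statement's English description precedes it below -/
import Mathlib

section
/- For every r ≥ 0 one has the chain of inequalities λ_i(r)² ≥ r², H₁(r)² ≥ λ_i(r)², H_ε(r)² ≥ H₁(r)², and λ_e(r)² ≥ H_ε(r)². -/
open Real

/-- `u(r) = (1-ε)+(T-ε)r²`. -/
noncomputable def uu (ε T r : ℝ) : ℝ := (1 - ε) + (T - ε) * r ^ 2

/-- The ion dispersion relation `λ_i`. -/
noncomputable def lamI (ε T r : ℝ) : ℝ :=
  (Real.sqrt ε)⁻¹ *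
    Real.sqrt (((1 + ε) + (T + ε) * r ^ 2 - Real.sqrt ((uu ε T r) ^ 2 + 4 * ε)) / 2)

/-- The electron dispersion relation `λ_e`. -/
noncomputable def lamE (ε T r : ℝ) : ℝ :=
  (Real.sqrt ε)⁻¹ *
    Real.sqrt (((1 + ε) + (T + ε) * r ^ 2 + Real.sqrt ((uu ε T r) ^ 2 + 4 * ε)) / 2)

/-- `H₁(r) = √(1+r²)`. -/
noncomputable def H1 (r : ℝ) : ℝ := Real.sqrt (1 + r ^ 2)

/-- `H_ε(r) = ε^{-1/2}√(1+Tr²)`. -/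
noncomputable def Heps (ε T r : ℝ) : ℝ := (Real.sqrt ε)⁻¹ * Real.sqrt (1 + T * r ^ 2)

/-- For every `r ≥ 0`: `λ_i(r)² ≥ r²`, `H₁(r)² ≥ λ_i(r)²`, `H_ε(r)² ≥ H₁(r)²`,
and `λ_e(r)² ≥ H_ε(r)²`. -/
theorem stmt0 (ε T : ℝ) (hε : 0 < ε) (hε' : ε ≤ 1 / 1000) (hT : 1 ≤ T) (hT' : T ≤ 100)
    (r : ℝ) (hr : 0 ≤ r) :
    r ^ 2 ≤ (lamI ε T r) ^ 2 ∧ (lamI ε T r) ^ 2 ≤ (H1 r) ^ 2 ∧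
      (H1 r) ^ 2 ≤ (Heps ε T r) ^ 2 ∧ (Heps ε T r) ^ 2 ≤ (lamE ε T r) ^ 2 := by
  have hs : (0:ℝ) ≤ r ^ 2 := sq_nonneg r
  set s := r ^ 2 with hsdef
  set u : ℝ := uu ε T r with hudef
  have hu_eq : u = (1 - ε) + (T - ε) * s := rfl
  set A : ℝ := (1 + ε) + (T + ε) * s with hAdef
  set v : ℝ := Real.sqrt (u ^ 2 + 4 * ε) with hvdef
  have hv0 : 0 ≤ v := Real.sqrt_nonneg _
  have hvsq : v ^ 2 = u ^ 2 + 4 * ε := by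
    rw [hvdef, Real.sq_sqrt]; nlinarith [sq_nonneg u]
  have hu_lb : 1 - ε ≤ u := by nlinarith
  have hu_le_v : u ≤ v := by
    calc u ≤ |u| := le_abs_self u
    _ = Real.sqrt (u ^ 2) := (Real.sqrt_sq_eq_abs u).symm
    _ ≤ v := Real.sqrt_le_sqrt (by nlinarith)
  have hv_le : v ≤ u + 2 * ε := by
    have h1 : u ^ 2 + 4 * ε ≤ (u + 2 * ε) ^ 2 := by nlinarith
    calc v ≤ Real.sqrt ((u + 2 * ε) ^ 2) := Real.sqrt_le_sqrt h1
    _ = u + 2 * ε := Real.sqrt_sq (by nlinarith)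
  have hv_le_A : v ≤ A := by nlinarith
  have hinv : ((Real.sqrt ε)⁻¹) ^ 2 = ε⁻¹ := by
    rw [inv_pow, Real.sq_sqrt hε.le]
  -- squares of the four quantities
  have hIsq : (lamI ε T r) ^ 2 = ε⁻¹ * ((A - v) / 2) := by
    rw [lamI, mul_pow, hinv, Real.sq_sqrt (by linarith : (0:ℝ) ≤ (A - v) / 2)]
  have hEsq : (lamE ε T r) ^ 2 = ε⁻¹ * ((A + v) / 2) := by
    rw [lamE, mul_pow, hinv, Real.sq_sqrt (by linarith : (0:ℝ) ≤ (A + v) / 2)]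
  have hH1sq : (H1 r) ^ 2 = 1 + s := by
    rw [H1, Real.sq_sqrt (by linarith)]
  have hHesq : (Heps ε T r) ^ 2 = ε⁻¹ * (1 + T * s) := by
    rw [Heps, mul_pow, hinv, Real.sq_sqrt (by nlinarith)]
  have hεinv : 0 < ε⁻¹ := inv_pos.mpr hε
  have key : ∀ x y : ℝ, x * ε ≤ y → x ≤ ε⁻¹ * y := by
    intro x y h
    rw [← le_div_iff₀ hε] at h
    calc x ≤ y / ε := h
    _ = ε⁻¹ * y := by ring
  clear_value s u A v
  clear hsdef hudef hvdef
  refine ⟨?_, ?_, ?_, ?_⟩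
  · rw [hIsq]; exact key _ _ (by nlinarith)
  · rw [hIsq, hH1sq]
    rw [inv_mul_eq_div, div_le_iff₀ hε]
    nlinarith
  · rw [hH1sq, hHesq]
    refine key _ _ ?_
    nlinarith [mul_nonneg (by linarith : (0:ℝ) ≤ 1 - ε) hs,
      mul_nonneg (by linarith : (0:ℝ) ≤ T - 1) hs]
  · rw [hHesq, hEsq]
    apply mul_le_mul_of_nonneg_left _ hεinv.le
    linarith
end

section
/- For every r ≥ 0 one has r ≤ λ_i(r) ≤ r·√(1+T). -/
open Real

/-- For every `r ≥ 0` one has `r ≤ λ_i(r) ≤ r√(1+T)`. -/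
theorem stmt4 (ε T : ℝ) (hε : 0 < ε) (hε' : ε ≤ 1 / 1000) (hT : 1 ≤ T) (hT' : T ≤ 100)
    (r : ℝ) (hr : 0 ≤ r) :
    r ≤ lamI ε T r ∧ lamI ε T r ≤ r * Real.sqrt (1 + T) := by
  have hε1 : ε ≤ 1 := by linarith
  have hu : uu ε T r = (1 - ε) + (T - ε) * r ^ 2 := rfl
  have hv0 : (0:ℝ) ≤ (uu ε T r) ^ 2 + 4 * ε := by positivity
  set v := Real.sqrt ((uu ε T r) ^ 2 + 4 * ε) with hv
  have hv2 : v ^ 2 = (uu ε T r) ^ 2 + 4 * ε := Real.sq_sqrt hv0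
  have hvnn : 0 ≤ v := Real.sqrt_nonneg _
  have hTε : (0:ℝ) ≤ T - ε - ε * T := by nlinarith
  have ha : (0:ℝ) ≤ (1 + ε) + (T - ε) * r ^ 2 := by nlinarith [sq_nonneg r]
  -- v ≤ (1+ε)+(T-ε)r²
  have hva : v ≤ (1 + ε) + (T - ε) * r ^ 2 := by
    rw [hv, show (1 + ε) + (T - ε) * r ^ 2 = Real.sqrt (((1 + ε) + (T - ε) * r ^ 2) ^ 2) from
      (Real.sqrt_sq ha).symm]
    apply Real.sqrt_le_sqrt
    rw [hu]
    nlinarith [sq_nonneg r, mul_nonneg (mul_nonneg hε.le (by linarith : (0:ℝ) ≤ T - ε)) (sq_nonneg r)]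
  -- A - 2ε(1+T)r² ≤ v
  have hcv : (1 + ε) + (T + ε) * r ^ 2 - 2 * ε * (1 + T) * r ^ 2 ≤ v := by
    have h1 : ((1 + ε) + (T + ε) * r ^ 2 - 2 * ε * (1 + T) * r ^ 2) ^ 2 ≤
        (uu ε T r) ^ 2 + 4 * ε := by
      rw [hu]
      nlinarith [mul_nonneg (mul_nonneg (mul_nonneg hε.le hε.le)
          (by linarith : (0:ℝ) ≤ 1 + T)) (sq_nonneg r),
        mul_nonneg (mul_nonneg (mul_nonneg hε.le (by linarith : (0:ℝ) ≤ T)) hTε)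
          (mul_nonneg (sq_nonneg r) (sq_nonneg r))]
    calc (1 + ε) + (T + ε) * r ^ 2 - 2 * ε * (1 + T) * r ^ 2
        ≤ |(1 + ε) + (T + ε) * r ^ 2 - 2 * ε * (1 + T) * r ^ 2| := le_abs_self _
      _ = Real.sqrt (((1 + ε) + (T + ε) * r ^ 2 - 2 * ε * (1 + T) * r ^ 2) ^ 2) :=
          (Real.sqrt_sq_eq_abs _).symm
      _ ≤ v := Real.sqrt_le_sqrt h1
  have hsε : (0:ℝ) < Real.sqrt ε := Real.sqrt_pos.mpr hε
  have hεsq : Real.sqrt ε * Real.sqrt ε = ε := Real.mul_self_sqrt hε.le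
  constructor
  · -- lower bound
    have h1 : ε * r ^ 2 ≤ ((1 + ε) + (T + ε) * r ^ 2 - v) / 2 := by nlinarith
    have h2 : Real.sqrt (ε * r ^ 2) ≤
        Real.sqrt (((1 + ε) + (T + ε) * r ^ 2 - v) / 2) := Real.sqrt_le_sqrt h1
    have h3 : Real.sqrt (ε * r ^ 2) = Real.sqrt ε * r := by
      rw [Real.sqrt_mul hε.le, Real.sqrt_sq hr]
    rw [lamI, ← hv]
    rw [h3] at h2
    calc r = (Real.sqrt ε)⁻¹ * (Real.sqrt ε * r) := by field_simp
      _ ≤ (Real.sqrt ε)⁻¹ * Real.sqrt (((1 + ε) + (T + ε) * r ^ 2 - v) / 2) :=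
          mul_le_mul_of_nonneg_left h2 (inv_nonneg.mpr hsε.le)
  · -- upper bound
    have h1 : ((1 + ε) + (T + ε) * r ^ 2 - v) / 2 ≤ ε * ((1 + T) * r ^ 2) := by nlinarith
    have h2 : Real.sqrt (((1 + ε) + (T + ε) * r ^ 2 - v) / 2) ≤
        Real.sqrt (ε * ((1 + T) * r ^ 2)) := Real.sqrt_le_sqrt h1
    have h3 : Real.sqrt (ε * ((1 + T) * r ^ 2)) = Real.sqrt ε * (r * Real.sqrt (1 + T)) := by
      rw [Real.sqrt_mul hε.le, Real.sqrt_mul (by linarith : (0:ℝ) ≤ 1 + T), Real.sqrt_sq hr]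
      ring
    rw [lamI, ← hv]
    rw [h3] at h2
    calc (Real.sqrt ε)⁻¹ * Real.sqrt (((1 + ε) + (T + ε) * r ^ 2 - v) / 2)
        ≤ (Real.sqrt ε)⁻¹ * (Real.sqrt ε * (r * Real.sqrt (1 + T))) :=
          mul_le_mul_of_nonneg_left h2 (inv_nonneg.mpr hsε.le)
      _ = r * Real.sqrt (1 + T) := by field_simp
end

section
/- Define q_i(r) = λ_i(r)/r for r > 0. Then for every r > 0 the derivative q_i'(r) exists and satisfies q_i'(r) ≤ −(1/2)·T²·r/(1+T+T r²)²; in particular q_i is strictly decreasing on (0,∞). -/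
open Real

noncomputable def vv (ε T s : ℝ) : ℝ := Real.sqrt ((uu ε T s) ^ 2 + 4 * ε)

noncomputable def DD (ε T s : ℝ) : ℝ := (1 + ε) + (T + ε) * s ^ 2 + vv ε T s

noncomputable def gg (ε T s : ℝ) : ℝ := Real.sqrt (2 * (1 + T + T * s ^ 2) / DD ε T s)

lemma uu_pos (ε T r : ℝ) (hε : 0 < ε) (hε' : ε ≤ 1 / 1000) (hT : 1 ≤ T) :
    0 < uu ε T r := by
  unfold uu; nlinarith [sq_nonneg r]

lemma vv_sq (ε T r : ℝ) (hε : 0 < ε) :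
    vv ε T r ^ 2 = ((1 - ε) + (T - ε) * r ^ 2) ^ 2 + 4 * ε := by
  unfold vv uu; exact Real.sq_sqrt (by positivity)

lemma vv_pos (ε T r : ℝ) (hε : 0 < ε) : 0 < vv ε T r :=
  Real.sqrt_pos.2 (by positivity)

lemma uu_le_vv (ε T r : ℝ) (hε : 0 < ε) (hε' : ε ≤ 1 / 1000) (hT : 1 ≤ T) :
    uu ε T r ≤ vv ε T r := by
  have h1 := vv_sq ε T r hε
  have h2 := vv_pos ε T r hε
  have h3 := uu_pos ε T r hε hε' hT
  have hud : uu ε T r = (1 - ε) + (T - ε) * r ^ 2 := rfl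
  nlinarith [h1, h2, h3]

lemma vv_le (ε T r : ℝ) (hε : 0 < ε) (hε' : ε ≤ 1 / 1000) (hT : 1 ≤ T) :
    vv ε T r ≤ uu ε T r + 3 * ε := by
  have h1 := vv_sq ε T r hε
  have h2 := vv_pos ε T r hε
  have h3 := uu_pos ε T r hε hε' hT
  have hud : uu ε T r = (1 - ε) + (T - ε) * r ^ 2 := rfl
  have hu1 : 1 - ε ≤ uu ε T r := by rw [hud]; nlinarith [sq_nonneg r]
  nlinarith [h1, h2, h3, hu1]

lemma DD_pos (ε T r : ℝ) (hε : 0 < ε) (hε' : ε ≤ 1 / 1000) (hT : 1 ≤ T) :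
    0 < DD ε T r := by
  have := vv_pos ε T r hε
  unfold DD; nlinarith [sq_nonneg r]

/-- The identity `λ_i(r)/r = √(2W/(A+v))`. -/
lemma lamI_div_eq (ε T : ℝ) (hε : 0 < ε) (hε' : ε ≤ 1 / 1000) (hT : 1 ≤ T)
    {r : ℝ} (hr : 0 < r) : lamI ε T r / r = gg ε T r := by
  have h1 := vv_sq ε T r hε
  have h2 := vv_pos ε T r hε
  set v := vv ε T r with hv
  set A : ℝ := (1 + ε) + (T + ε) * r ^ 2 with hA
  have hApos : 0 < A := by rw [hA]; nlinarith [sq_nonneg r]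
  have hT0 : (0:ℝ) < T := lt_of_lt_of_le one_pos hT
  have hvA2 : v ^ 2 ≤ A ^ 2 := by
    rw [h1, hA]
    nlinarith [mul_pos hε (pow_pos hr 2), mul_pos (mul_pos hε hT0) (pow_pos hr 2),
      mul_pos (mul_pos (mul_pos hε hT0) (pow_pos hr 2)) (pow_pos hr 2)]
  have hvA : v ≤ A := by nlinarith [hvA2, h2, hApos]
  have hstep1 : lamI ε T r / r = Real.sqrt ((A - v) / 2) / (Real.sqrt ε * r) := by
    unfold lamI
    rw [show Real.sqrt (uu ε T r ^ 2 + 4 * ε) = v from rfl, ← hA]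
    rw [inv_mul_eq_div, div_div]
  have hsq : Real.sqrt ε * r = Real.sqrt (ε * r ^ 2) := by
    rw [Real.sqrt_mul hε.le, Real.sqrt_sq hr.le]
  rw [hstep1, hsq, ← Real.sqrt_div (by linarith : (0:ℝ) ≤ (A - v) / 2)]
  unfold gg DD
  rw [← hA, ← hv]
  congr 1
  rw [div_eq_div_iff (by positivity) (by positivity)]
  rw [hA]
  linear_combination (-(1:ℝ) / 2) * h1

lemma gg_hasDeriv (ε T : ℝ) (hε : 0 < ε) (hε' : ε ≤ 1 / 1000) (hT : 1 ≤ T) (r : ℝ) :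
    HasDerivAt (gg ε T)
      ((4 * T * r * DD ε T r -
          2 * (1 + T + T * r ^ 2) * (2 * (T + ε) * r + uu ε T r * (2 * (T - ε) * r) / vv ε T r))
        / DD ε T r ^ 2 / (2 * gg ε T r)) r := by
  have hvpos := vv_pos ε T r hε
  have hDpos := DD_pos ε T r hε hε' hT
  have hu' : HasDerivAt (uu ε T) (2 * (T - ε) * r) r := by
    have h := ((hasDerivAt_pow 2 r).const_mul (T - ε)).const_add (1 - ε)
    refine h.congr_deriv ?_
    push_cast; ring
  have hinner : HasDerivAt (fun s => (uu ε T s) ^ 2 + 4 * ε)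
      (2 * uu ε T r ^ 1 * (2 * (T - ε) * r)) r := by
    exact_mod_cast (hu'.pow 2).add_const (4 * ε)
  have hv' : HasDerivAt (vv ε T) (uu ε T r * (2 * (T - ε) * r) / vv ε T r) r := by
    have h := hinner.sqrt (by positivity)
    have hv : Real.sqrt (uu ε T r ^ 2 + 4 * ε) = vv ε T r := rfl
    unfold vv
    convert h using 1
    rw [hv]
    field_simp
  have hD' : HasDerivAt (DD ε T)
      (2 * (T + ε) * r + uu ε T r * (2 * (T - ε) * r) / vv ε T r) r := by
    have hA : HasDerivAt (fun s : ℝ => (1 + ε) + (T + ε) * s ^ 2) (2 * (T + ε) * r) r := by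
      have h := ((hasDerivAt_pow 2 r).const_mul (T + ε)).const_add (1 + ε)
      refine h.congr_deriv ?_
      push_cast; ring
    exact hA.add hv'
  have hN' : HasDerivAt (fun s : ℝ => 2 * (1 + T + T * s ^ 2)) (4 * T * r) r := by
    have h := (((hasDerivAt_pow 2 r).const_mul T).const_add (1 + T)).const_mul 2
    refine h.congr_deriv ?_
    push_cast; ring
  have hh' := hN'.div hD' (ne_of_gt hDpos)
  have hhpos : 0 < 2 * (1 + T + T * r ^ 2) / DD ε T r := by
    apply div_pos _ hDpos
    nlinarith [sq_nonneg r]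
  exact hh'.sqrt (ne_of_gt hhpos)

lemma core_ineq (ε T u : ℝ) (hε : 0 < ε) (hε' : ε ≤ 1 / 1000) (hT : 1 ≤ T) (hu : 1 - ε ≤ u) :
    T ^ 2 * (u + 3 * ε) ^ 2 * (2 + 3 * ε) ^ 3 ≤ 32 * (T * u - 2 * ε) ^ 2 := by
  have hT0 : (0:ℝ) < T := by linarith
  have hu0 : (0:ℝ) < u := by linarith
  have haT : T * (1 - ε) ≤ T * u := by nlinarith
  have hTb : (999/1000 : ℝ) * T ≤ T * u := by nlinarith
  have hεT : ε * T ≤ (1/1000 : ℝ) * T := by nlinarith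
  have B1 : T * (u + 3 * ε) ≤ (334/333 : ℝ) * (T * u) := by nlinarith
  have B3 : (997/999 : ℝ) * (T * u) ≤ T * u - 2 * ε := by nlinarith
  have B1' : (T * (u + 3 * ε))^2 ≤ ((334/333 : ℝ) * (T * u))^2 :=
    pow_le_pow_left₀ (by positivity) B1 2
  have B3' : ((997/999 : ℝ) * (T * u))^2 ≤ (T * u - 2 * ε)^2 :=
    pow_le_pow_left₀ (by positivity) B3 2
  have B2 : (2 + 3 * ε)^3 ≤ (81/10 : ℝ) := by
    nlinarith [mul_le_mul_of_nonneg_left hε' hε.le,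
      mul_le_mul_of_nonneg_left (mul_le_mul_of_nonneg_left hε' hε.le) hε.le, hε.le]
  calc T ^ 2 * (u + 3 * ε) ^ 2 * (2 + 3 * ε) ^ 3
      = (T * (u + 3 * ε))^2 * (2 + 3 * ε)^3 := by ring
    _ ≤ ((334/333 : ℝ) * (T * u))^2 * (81/10 : ℝ) :=
        mul_le_mul B1' B2 (by positivity) (by positivity)
    _ ≤ 32 * (((997/999 : ℝ) * (T * u))^2) := by nlinarith [sq_nonneg (T * u)]
    _ ≤ 32 * (T * u - 2 * ε)^2 := by linarith

lemma Kb_pos (ε T u : ℝ) (hε : 0 < ε) (hε' : ε ≤ 1 / 1000) (hT : 1 ≤ T) (hu1 : 1 - ε ≤ u) :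
    0 < 2 * T ^ 2 * u - 4 * ε * T := by
  nlinarith [mul_le_mul_of_nonneg_right hε' (sq_nonneg T), sq_nonneg T,
    mul_le_mul_of_nonneg_left hu1 (by positivity : (0:ℝ) ≤ 2 * T ^ 2), sq_nonneg (T - 1)]

lemma estimate (ε T r u v Dv s : ℝ) (hε : 0 < ε) (hε' : ε ≤ 1 / 1000) (hT : 1 ≤ T)
    (hr : 0 < r) (hu : u = (1 - ε) + (T - ε) * r ^ 2) (hv2 : v ^ 2 = u ^ 2 + 4 * ε)
    (hvpos : 0 < v) (hDv : Dv = (1 + ε) + (T + ε) * r ^ 2 + v)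
    (hs2 : s ^ 2 = 2 * (1 + T + T * r ^ 2) / Dv) (hspos : 0 < s) :
    4 * r * (T * v * Dv - (1 + T + T * r ^ 2) * ((T + ε) * v + (T - ε) * u)) / (v * Dv ^ 2)
        / (2 * s)
      ≤ -(1 / 2) * T ^ 2 * r / (1 + T + T * r ^ 2) ^ 2 := by
  have hT0 : (0:ℝ) < T := by linarith
  have hu1 : 1 - ε ≤ u := by rw [hu]; nlinarith [sq_nonneg r]
  have hupos : 0 < u := by linarith
  have huv : u ≤ v := by nlinarith [hv2, hvpos, hupos]
  have hvle : v ≤ u + 3 * ε := by nlinarith [hv2, hvpos, hu1, hε]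
  have hxpos : (0:ℝ) < 1 + T * r ^ 2 := by nlinarith [sq_nonneg r]
  have hx1 : (1:ℝ) ≤ 1 + T * r ^ 2 := by nlinarith [sq_nonneg r]
  have hWpos : (0:ℝ) < 1 + T + T * r ^ 2 := by linarith
  have hDpos : 0 < Dv := by rw [hDv]; nlinarith [sq_nonneg r, hvpos]
  have hv2' : v ^ 2 = ((1 - ε) + (T - ε) * r ^ 2) ^ 2 + 4 * ε := by rw [← hu]; exact hv2
  obtain ⟨K, hKdef⟩ : ∃ K : ℝ,
      K = T * v * Dv - (1 + T + T * r ^ 2) * ((T + ε) * v + (T - ε) * u) := ⟨_, rfl⟩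
  rw [← hKdef]
  have hK : K = 4 * ε * T - (T ^ 2 + ε) * v - (T ^ 2 - ε) * u := by
    rw [hKdef, hDv, hu]
    linear_combination T * hv2'
  have hKle : K ≤ -(2 * T ^ 2 * u - 4 * ε * T) := by
    rw [hK]
    linarith [mul_le_mul_of_nonneg_left huv (by positivity : (0:ℝ) ≤ T ^ 2 + ε)]
  have hKbpos : 0 < 2 * T ^ 2 * u - 4 * ε * T := Kb_pos ε T u hε hε' hT hu1
  have hKneg : K < 0 := lt_of_le_of_lt hKle (by linarith)
  have hDhigh : Dv ≤ (2 + 3 * ε) * (1 + T * r ^ 2) := by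
    linarith [hvle, hDv, hu, mul_nonneg hε.le (mul_nonneg hT0.le (sq_nonneg r))]
  have key : T ^ 4 * v ^ 2 * Dv ^ 3 ≤ 8 * K ^ 2 * (1 + T + T * r ^ 2) ^ 3 := by
    have k1 : T ^ 4 * v ^ 2 * Dv ^ 3 ≤
        T ^ 4 * (u + 3 * ε) ^ 2 * ((2 + 3 * ε) * (1 + T * r ^ 2)) ^ 3 := by
      gcongr <;> positivity
    have k2 : T ^ 4 * (u + 3 * ε) ^ 2 * ((2 + 3 * ε) * (1 + T * r ^ 2)) ^ 3 ≤
        8 * (2 * T ^ 2 * u - 4 * ε * T) ^ 2 * (1 + T * r ^ 2) ^ 3 := by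
      have hc := core_ineq ε T u hε hε' hT hu1
      linarith [mul_le_mul_of_nonneg_left hc
        (by positivity : (0:ℝ) ≤ T ^ 2 * (1 + T * r ^ 2) ^ 3)]
    have k3 : 8 * (2 * T ^ 2 * u - 4 * ε * T) ^ 2 * (1 + T * r ^ 2) ^ 3 ≤
        8 * K ^ 2 * (1 + T + T * r ^ 2) ^ 3 := by
      have hK2 : (2 * T ^ 2 * u - 4 * ε * T) ^ 2 ≤ K ^ 2 := by
        have h1 : (2 * T ^ 2 * u - 4 * ε * T) ^ 2 ≤ (-K) ^ 2 :=
          pow_le_pow_left₀ hKbpos.le (by linarith) 2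
        have h2 : (-K) ^ 2 = K ^ 2 := by ring
        linarith
      have hx3 : (1 + T * r ^ 2) ^ 3 ≤ (1 + T + T * r ^ 2) ^ 3 := by gcongr <;> linarith
      linarith [mul_le_mul (mul_le_mul_of_nonneg_left hK2 (by norm_num : (0:ℝ) ≤ 8)) hx3
        (by positivity) (by positivity)]
    linarith [k1, k2, k3]
  have hfinal : T ^ 2 * s * (v * Dv ^ 2) ≤ 4 * (-K) * (1 + T + T * r ^ 2) ^ 2 := by
    have hsq : (T ^ 2 * s * (v * Dv ^ 2)) ^ 2 ≤
        (4 * (-K) * (1 + T + T * r ^ 2) ^ 2) ^ 2 := by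
      have e1 : (T ^ 2 * s * (v * Dv ^ 2)) ^ 2 = T ^ 4 * s ^ 2 * (v ^ 2 * Dv ^ 4) := by ring
      rw [e1, hs2]
      have e2 : T ^ 4 * (2 * (1 + T + T * r ^ 2) / Dv) * (v ^ 2 * Dv ^ 4) =
          2 * (1 + T + T * r ^ 2) * (T ^ 4 * v ^ 2 * Dv ^ 3) := by
        field_simp
      rw [e2]
      linarith [mul_le_mul_of_nonneg_left key
        (by positivity : (0:ℝ) ≤ 2 * (1 + T + T * r ^ 2))]
    exact (pow_le_pow_iff_left₀
      (mul_nonneg (mul_nonneg (pow_nonneg hT0.le 2) hspos.le)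
        (mul_nonneg hvpos.le (pow_nonneg hDpos.le 2)))
      (mul_nonneg (mul_nonneg (by norm_num) (neg_nonneg.2 hKneg.le))
        (pow_nonneg hWpos.le 2)) two_ne_zero).1 hsq
  rw [div_div, div_le_div_iff₀ (by positivity) (by positivity)]
  linarith [mul_le_mul_of_nonneg_left hfinal hr.le]

lemma main_pt (ε T : ℝ) (hε : 0 < ε) (hε' : ε ≤ 1 / 1000) (hT : 1 ≤ T) (hT' : T ≤ 100)
    {r : ℝ} (hr : 0 < r) :
    ∃ d : ℝ, HasDerivAt (fun s => lamI ε T s / s) d r ∧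
      d ≤ -(1 / 2) * T ^ 2 * r / (1 + T + T * r ^ 2) ^ 2 := by
  have hvpos := vv_pos ε T r hε
  have hDpos := DD_pos ε T r hε hε' hT
  have hv2 : vv ε T r ^ 2 = uu ε T r ^ 2 + 4 * ε := Real.sq_sqrt (by positivity)
  have hhpos : 0 < 2 * (1 + T + T * r ^ 2) / DD ε T r := by
    apply div_pos _ hDpos; nlinarith [sq_nonneg r]
  have hspos : 0 < gg ε T r := Real.sqrt_pos.2 hhpos
  have hs2 : gg ε T r ^ 2 = 2 * (1 + T + T * r ^ 2) / DD ε T r := Real.sq_sqrt hhpos.le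
  have hgderiv := gg_hasDeriv ε T hε hε' hT r
  have heq : (fun x => lamI ε T x / x) =ᶠ[nhds r] gg ε T := by
    filter_upwards [isOpen_Ioi.mem_nhds (Set.mem_Ioi.2 hr)] with x hx
    exact lamI_div_eq ε T hε hε' hT hx
  have hclean : (4 * T * r * DD ε T r -
      2 * (1 + T + T * r ^ 2) *
        (2 * (T + ε) * r + uu ε T r * (2 * (T - ε) * r) / vv ε T r))
        / DD ε T r ^ 2 / (2 * gg ε T r) =
      4 * r * (T * vv ε T r * DD ε T r -
        (1 + T + T * r ^ 2) * ((T + ε) * vv ε T r + (T - ε) * uu ε T r))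
        / (vv ε T r * DD ε T r ^ 2) / (2 * gg ε T r) := by
    rw [div_eq_div_iff (by positivity) (by positivity)]
    field_simp
    ring
  rw [hclean] at hgderiv
  refine ⟨_, hgderiv.congr_of_eventuallyEq heq, ?_⟩
  exact estimate ε T r (uu ε T r) (vv ε T r) (DD ε T r) (gg ε T r) hε hε' hT hr rfl hv2
    hvpos rfl hs2 hspos

/-- With `q_i(r) = λ_i(r)/r` for `r > 0`, the derivative `q_i'(r)` exists and satisfies
`q_i'(r) ≤ −(1/2)T²r/(1+T+Tr²)²`; in particular `q_i` is strictly decreasing on `(0,∞)`. -/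
theorem stmt5 (ε T : ℝ) (hε : 0 < ε) (hε' : ε ≤ 1 / 1000) (hT : 1 ≤ T) (hT' : T ≤ 100) :
    (∀ r : ℝ, 0 < r → ∃ d : ℝ, HasDerivAt (fun s => lamI ε T s / s) d r ∧
      d ≤ -(1 / 2) * T ^ 2 * r / (1 + T + T * r ^ 2) ^ 2) ∧
    StrictAntiOn (fun s => lamI ε T s / s) (Set.Ioi 0) := by
  refine ⟨fun r hr => main_pt ε T hε hε' hT hT' hr, ?_⟩
  apply strictAntiOn_of_deriv_neg (convex_Ioi 0)
  · intro x hx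
    obtain ⟨d, hd, -⟩ := main_pt ε T hε hε' hT hT' hx
    exact hd.continuousAt.continuousWithinAt
  · intro x hx
    rw [interior_Ioi] at hx
    obtain ⟨d, hd, hdle⟩ := main_pt ε T hε hε' hT hT' hx
    rw [hd.deriv]
    have hpos : 0 < (1 / 2) * T ^ 2 * x / (1 + T + T * x ^ 2) ^ 2 := by
      have hx0 : (0:ℝ) < x := hx
      have : (0:ℝ) < 1 + T + T * x ^ 2 := by nlinarith [sq_nonneg x]
      positivity
    have : -(1 / 2) * T ^ 2 * x / (1 + T + T * x ^ 2) ^ 2 < 0 := by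
      rw [neg_mul, neg_mul, neg_div]; linarith
    linarith
end

section
/- For all real numbers a, b with 0 ≤ a ≤ b one has λ_b(a) + λ_b(b) − λ_b(a+b) ≥ (1+ε) / (2·ε·λ_b(a)). -/
open Real

/-- The magnetic dispersion relation `λ_b(r) = ε^{-1/2}√(1+ε+C_b r²)`. -/
noncomputable def lamB (ε Cb r : ℝ) : ℝ := (Real.sqrt ε)⁻¹ * Real.sqrt (1 + ε + Cb * r ^ 2)

lemma key_aux (s A B : ℝ) (hs : 0 < s) (hA : s ≤ A) (hB : s ≤ B) :
    2 * Real.sqrt A * Real.sqrt (A + B - s + 2 * Real.sqrt (A - s) * Real.sqrt (B - s))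
      ≤ 2 * Real.sqrt A * Real.sqrt B + 2 * A - s := by
  have hA0 : (0:ℝ) ≤ A := by linarith
  have hB0 : (0:ℝ) ≤ B := by linarith
  have hAs : (0:ℝ) ≤ A - s := by linarith
  have hBs : (0:ℝ) ≤ B - s := by linarith
  have x := Real.sqrt_nonneg A
  have y := Real.sqrt_nonneg B
  have p := Real.sqrt_nonneg (A - s)
  have q := Real.sqrt_nonneg (B - s)
  have hx2 : Real.sqrt A * Real.sqrt A = A := Real.mul_self_sqrt hA0
  have hy2 : Real.sqrt B * Real.sqrt B = B := Real.mul_self_sqrt hB0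
  have hp2 : Real.sqrt (A - s) * Real.sqrt (A - s) = A - s := Real.mul_self_sqrt hAs
  have hq2 : Real.sqrt (B - s) * Real.sqrt (B - s) = B - s := Real.mul_self_sqrt hBs
  -- q ≤ y
  have hqy : Real.sqrt (B - s) ≤ Real.sqrt B := Real.sqrt_le_sqrt (by linarith)
  -- p * x ≤ A - s/2
  have hpx : Real.sqrt (A - s) * Real.sqrt A ≤ A - s / 2 := by
    rw [← Real.sqrt_mul hAs]
    have h1 : (A - s) * A ≤ (A - s / 2) ^ 2 := by nlinarith
    calc Real.sqrt ((A - s) * A) ≤ Real.sqrt ((A - s / 2) ^ 2) := Real.sqrt_le_sqrt h1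
      _ = A - s / 2 := Real.sqrt_sq (by linarith)
  -- inner argument nonneg
  have hX0 : (0:ℝ) ≤ A + B - s + 2 * Real.sqrt (A - s) * Real.sqrt (B - s) := by nlinarith
  have hRHS : (0:ℝ) ≤ 2 * Real.sqrt A * Real.sqrt B + 2 * A - s := by nlinarith
  have h2' : A * (Real.sqrt (A - s) * Real.sqrt B) ≤ (A - s / 2) * (Real.sqrt A * Real.sqrt B) := by
    calc A * (Real.sqrt (A - s) * Real.sqrt B)
        = (Real.sqrt (A - s) * Real.sqrt A) * (Real.sqrt A * Real.sqrt B) := by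
          rw [show (Real.sqrt (A - s) * Real.sqrt A) * (Real.sqrt A * Real.sqrt B)
              = (Real.sqrt A * Real.sqrt A) * (Real.sqrt (A - s) * Real.sqrt B) from by ring, hx2]
      _ ≤ (A - s / 2) * (Real.sqrt A * Real.sqrt B) :=
          mul_le_mul_of_nonneg_right hpx (mul_nonneg x y)
  have h1' : A * (Real.sqrt (A - s) * Real.sqrt (B - s))
      ≤ A * (Real.sqrt (A - s) * Real.sqrt B) :=
    mul_le_mul_of_nonneg_left (mul_le_mul_of_nonneg_left hqy p) hA0
  have key2 : 2 * A * (Real.sqrt (A - s) * Real.sqrt (B - s))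
      ≤ Real.sqrt A * Real.sqrt B * (2 * A - s) + s ^ 2 / 4 := by nlinarith [h1', h2', hs]
  have hsq2 : 4 * A * (A + B - s + 2 * Real.sqrt (A - s) * Real.sqrt (B - s))
      ≤ (2 * Real.sqrt A * Real.sqrt B + 2 * A - s) ^ 2 := by nlinarith [key2]
  have hxpos : 0 < Real.sqrt A := Real.sqrt_pos.mpr (by linarith)
  have hLHSeq : Real.sqrt (4 * A * (A + B - s + 2 * Real.sqrt (A - s) * Real.sqrt (B - s)))
      = 2 * Real.sqrt A * Real.sqrt (A + B - s + 2 * Real.sqrt (A - s) * Real.sqrt (B - s)) := by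
    rw [show 4 * A * (A + B - s + 2 * Real.sqrt (A - s) * Real.sqrt (B - s))
        = (2 * Real.sqrt A) ^ 2 * (A + B - s + 2 * Real.sqrt (A - s) * Real.sqrt (B - s)) from by
      nlinarith]
    rw [Real.sqrt_mul (by positivity), Real.sqrt_sq (by positivity)]
  calc 2 * Real.sqrt A * Real.sqrt (A + B - s + 2 * Real.sqrt (A - s) * Real.sqrt (B - s))
      = Real.sqrt (4 * A * (A + B - s + 2 * Real.sqrt (A - s) * Real.sqrt (B - s))) := hLHSeq.symm
    _ ≤ Real.sqrt ((2 * Real.sqrt A * Real.sqrt B + 2 * A - s) ^ 2) := Real.sqrt_le_sqrt hsq2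
    _ = 2 * Real.sqrt A * Real.sqrt B + 2 * A - s := Real.sqrt_sq hRHS

/-- For `0 ≤ a ≤ b`: `λ_b(a)+λ_b(b)−λ_b(a+b) ≥ (1+ε)/(2ελ_b(a))`. -/
theorem stmt7 (ε T Cb : ℝ) (hε : 0 < ε) (hε' : ε ≤ 1 / 1000) (hT : 1 ≤ T) (hT' : T ≤ 100)
    (hCb : 6 * T ≤ Cb) (a b : ℝ) (ha : 0 ≤ a) (hab : a ≤ b) :
    (1 + ε) / (2 * ε * lamB ε Cb a) ≤ lamB ε Cb a + lamB ε Cb b - lamB ε Cb (a + b) := by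
  have hC : (0:ℝ) < Cb := by linarith
  have hb : (0:ℝ) ≤ b := le_trans ha hab
  have hs : (0:ℝ) < 1 + ε := by linarith
  have hA : 1 + ε ≤ 1 + ε + Cb * a ^ 2 := by nlinarith
  have hB : 1 + ε ≤ 1 + ε + Cb * b ^ 2 := by nlinarith
  have hsab : Real.sqrt (1 + ε + Cb * a ^ 2 - (1 + ε)) * Real.sqrt (1 + ε + Cb * b ^ 2 - (1 + ε))
      = Cb * a * b := by
    have h1 : 1 + ε + Cb * a ^ 2 - (1 + ε) = Cb * a ^ 2 := by ring
    have h2 : 1 + ε + Cb * b ^ 2 - (1 + ε) = Cb * b ^ 2 := by ring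
    rw [h1, h2, Real.sqrt_mul hC.le, Real.sqrt_mul hC.le, Real.sqrt_sq ha, Real.sqrt_sq hb]
    have h3 : Real.sqrt Cb * Real.sqrt Cb = Cb := Real.mul_self_sqrt hC.le
    calc Real.sqrt Cb * a * (Real.sqrt Cb * b) = Real.sqrt Cb * Real.sqrt Cb * (a * b) := by ring
      _ = Cb * a * b := by rw [h3]; ring
  have key := key_aux (1 + ε) (1 + ε + Cb * a ^ 2) (1 + ε + Cb * b ^ 2) hs hA hB
  have hXeq : 1 + ε + Cb * a ^ 2 + (1 + ε + Cb * b ^ 2) - (1 + ε)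
      + 2 * Real.sqrt (1 + ε + Cb * a ^ 2 - (1 + ε)) * Real.sqrt (1 + ε + Cb * b ^ 2 - (1 + ε))
      = 1 + ε + Cb * (a + b) ^ 2 := by rw [mul_assoc, hsab]; ring
  rw [hXeq] at key
  have hxpos : 0 < Real.sqrt (1 + ε + Cb * a ^ 2) := Real.sqrt_pos.mpr (by linarith)
  have hx2 : Real.sqrt (1 + ε + Cb * a ^ 2) * Real.sqrt (1 + ε + Cb * a ^ 2)
      = 1 + ε + Cb * a ^ 2 := Real.mul_self_sqrt (by linarith)
  have hmain : (1 + ε) / (2 * Real.sqrt (1 + ε + Cb * a ^ 2))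
      ≤ Real.sqrt (1 + ε + Cb * a ^ 2) + Real.sqrt (1 + ε + Cb * b ^ 2)
        - Real.sqrt (1 + ε + Cb * (a + b) ^ 2) := by
    rw [div_le_iff₀ (by positivity)]
    nlinarith [key]
  have hse : 0 < Real.sqrt ε := Real.sqrt_pos.mpr hε
  have hse2 : Real.sqrt ε * Real.sqrt ε = ε := Real.mul_self_sqrt hε.le
  have hL : (1 + ε) / (2 * ε * lamB ε Cb a)
      = (Real.sqrt ε)⁻¹ * ((1 + ε) / (2 * Real.sqrt (1 + ε + Cb * a ^ 2))) := by
    rw [lamB]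
    rw [show 2 * ε * ((Real.sqrt ε)⁻¹ * Real.sqrt (1 + ε + Cb * a ^ 2))
        = 2 * Real.sqrt ε * Real.sqrt (1 + ε + Cb * a ^ 2) from by
      rw [show 2 * ε * ((Real.sqrt ε)⁻¹ * Real.sqrt (1 + ε + Cb * a ^ 2))
          = 2 * (Real.sqrt ε * Real.sqrt ε) * ((Real.sqrt ε)⁻¹ * Real.sqrt (1 + ε + Cb * a ^ 2))
          from by rw [hse2]]
      field_simp]
    rw [inv_mul_eq_div, div_div]
    ring_nf
  rw [hL, lamB, lamB, lamB]
  have h := mul_le_mul_of_nonneg_left hmain (by positivity : (0:ℝ) ≤ (Real.sqrt ε)⁻¹)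
  linarith [h]
end

section
/- For every r ≥ 0 one has H_ε(r) ≤ λ_e(r) and λ_e(r) − H_ε(r) ≤ 1/(2·u(r)·H_ε(r)), where u(r) = (1−ε)+(T−ε)r² (which is strictly positive under the assumptions on ε and T). -/
open Real

/-- For every `r ≥ 0`: `u(r) > 0`, `H_ε(r) ≤ λ_e(r)`, and
`λ_e(r) − H_ε(r) ≤ 1/(2u(r)H_ε(r))`. -/
theorem stmt8 (ε T : ℝ) (hε : 0 < ε) (hε' : ε ≤ 1 / 1000) (hT : 1 ≤ T) (hT' : T ≤ 100)
    (r : ℝ) (hr : 0 ≤ r) :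
    0 < uu ε T r ∧ Heps ε T r ≤ lamE ε T r ∧
      lamE ε T r - Heps ε T r ≤ 1 / (2 * uu ε T r * Heps ε T r) := by
  have hε1 : ε < 1 := by linarith
  have hr2 : 0 ≤ r ^ 2 := sq_nonneg r
  have hu : 0 < uu ε T r := by
    have h1 : 0 ≤ (T - ε) * r ^ 2 := mul_nonneg (by linarith) hr2
    unfold uu; linarith
  set u := uu ε T r with hudef
  set s := Real.sqrt ε with hsdef
  have hs : 0 < s := Real.sqrt_pos.2 hε
  have hs2 : s ^ 2 = ε := Real.sq_sqrt hε.le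
  set v := Real.sqrt (u ^ 2 + 4 * ε) with hvdef
  have hv0 : 0 ≤ v := Real.sqrt_nonneg _
  have hv2 : v ^ 2 = u ^ 2 + 4 * ε := Real.sq_sqrt (by positivity)
  have hvu : u ≤ v := by nlinarith
  set A := (1 + ε) + (T + ε) * r ^ 2 with hAdef
  have hAu : A + u = 2 + 2 * T * r ^ 2 := by rw [hudef]; unfold uu; ring
  have hApos : 0 < A := by nlinarith
  have h1T : (0:ℝ) < 1 + T * r ^ 2 := by nlinarith
  have hX : 0 ≤ (A + v) / 2 := by positivity
  have hHle : Heps ε T r ≤ lamE ε T r := by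
    unfold Heps lamE
    rw [← hsdef, ← hudef, ← hvdef, ← hAdef]
    have : Real.sqrt (1 + T * r ^ 2) ≤ Real.sqrt ((A + v) / 2) :=
      Real.sqrt_le_sqrt (by linarith)
    exact mul_le_mul_of_nonneg_left this (by positivity)
  refine ⟨hu, hHle, ?_⟩
  set L := lamE ε T r with hLdef
  set H := Heps ε T r with hHdef
  have hL2 : L ^ 2 = ε⁻¹ * ((A + v) / 2) := by
    rw [hLdef]; unfold lamE
    rw [← hsdef, ← hudef, ← hvdef, ← hAdef, mul_pow, Real.sq_sqrt hX, inv_pow, hs2]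
  have hH2 : H ^ 2 = ε⁻¹ * (1 + T * r ^ 2) := by
    rw [hHdef]; unfold Heps
    rw [← hsdef, mul_pow, Real.sq_sqrt h1T.le, inv_pow, hs2]
  have hHpos : 0 < H := by
    rw [hHdef]; unfold Heps
    exact mul_pos (by rw [← hsdef]; positivity) (Real.sqrt_pos.2 h1T)
  have key : u * (v - u) ≤ 2 * ε := by nlinarith [sq_nonneg (v - u)]
  have diff : L ^ 2 - H ^ 2 = (v - u) / (2 * ε) := by
    rw [hL2, hH2]
    have : (A + v) / 2 - (1 + T * r ^ 2) = (v - u) / 2 := by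
      have : A = 2 + 2 * T * r ^ 2 - u := by linarith
      rw [this]; ring
    rw [← mul_sub, this, inv_mul_eq_div, div_div]
  have hkey2 : u * (L ^ 2 - H ^ 2) ≤ 1 := by
    rw [diff, ← mul_div_assoc, div_le_one (by linarith)]
    linarith
  rw [le_div_iff₀ (by positivity)]
  nlinarith [sq_nonneg (L - H), hkey2, hu, hHpos, hHle]
end

section
/- For every r > 0 the derivatives λ_e'(r) and H_ε'(r) exist and satisfy 0 ≤ H_ε'(r) − λ_e'(r) ≤ 2·T·r / (u(r)²·λ_e(r)), where u(r) = (1−ε)+(T−ε)r². In particular the function r ↦ λ_e(r) − H_ε(r) is nonincreasing on [0,∞). -/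
open Real

set_option maxHeartbeats 2000000 in
/-- For every `r > 0` the derivatives `λ_e'(r)` and `H_ε'(r)` exist and satisfy
`0 ≤ H_ε'(r) − λ_e'(r) ≤ 2Tr/(u(r)²λ_e(r))`; in particular `r ↦ λ_e(r) − H_ε(r)` is
nonincreasing on `[0,∞)`. -/
theorem stmt9 (ε T : ℝ) (hε : 0 < ε) (hε' : ε ≤ 1 / 1000) (hT : 1 ≤ T) (hT' : T ≤ 100) :
    (∀ r : ℝ, 0 < r → ∃ de dh : ℝ,
      HasDerivAt (fun s => lamE ε T s) de r ∧ HasDerivAt (fun s => Heps ε T s) dh r ∧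
      0 ≤ dh - de ∧ dh - de ≤ 2 * T * r / ((uu ε T r) ^ 2 * lamE ε T r)) ∧
    AntitoneOn (fun s => lamE ε T s - Heps ε T s) (Set.Ici 0) := by
  have hε1 : ε < 1 := lt_of_le_of_lt hε' (by norm_num)
  have hεT : ε < T := lt_of_lt_of_le hε1 hT
  have he' : 0 < Real.sqrt ε := Real.sqrt_pos.mpr hε
  have hee : (Real.sqrt ε)^2 = ε := Real.sq_sqrt hε.le
  have hmain : ∀ r : ℝ, 0 < r → ∃ de dh : ℝ,
      HasDerivAt (fun s => lamE ε T s) de r ∧ HasDerivAt (fun s => Heps ε T s) dh r ∧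
      0 ≤ dh - de ∧ dh - de ≤ 2 * T * r / ((uu ε T r) ^ 2 * lamE ε T r) := by
    intro r hr
    -- raw derivatives
    have hP : (0:ℝ) < 1 + T*r^2 := by have := mul_nonneg (by linarith : (0:ℝ) ≤ T) (sq_nonneg r); linarith
    have hduu : HasDerivAt (fun s => uu ε T s) ((T-ε)*(2*r^1)) r :=
      ((hasDerivAt_pow 2 r).const_mul (T-ε)).const_add (1-ε)
    have hg : HasDerivAt (fun s => (uu ε T s)^2 + 4*ε)
        (2 * (uu ε T r)^1 * ((T-ε)*(2*r^1))) r := (hduu.pow 2).add_const _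
    have hgpos : (0:ℝ) < (uu ε T r)^2 + 4*ε := by positivity
    have hvd : HasDerivAt (fun s => Real.sqrt ((uu ε T s)^2 + 4*ε))
        ((2 * (uu ε T r)^1 * ((T-ε)*(2*r^1))) / (2 * Real.sqrt ((uu ε T r)^2 + 4*ε))) r :=
      hg.sqrt hgpos.ne'
    have hApos : (0:ℝ) < ((1+ε) + (T+ε)*r^2 + Real.sqrt ((uu ε T r)^2 + 4*ε))/2 := by positivity
    have hinner : HasDerivAt (fun s => ((1+ε) + (T+ε)*s^2 + Real.sqrt ((uu ε T s)^2 + 4*ε))/2)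
        (((T+ε)*(2*r^1) + (2 * (uu ε T r)^1 * ((T-ε)*(2*r^1))) / (2 * Real.sqrt ((uu ε T r)^2 + 4*ε)))/2) r :=
      ((((hasDerivAt_pow 2 r).const_mul (T+ε)).const_add (1+ε)).add hvd).div_const 2
    have hlamd : HasDerivAt (fun s => lamE ε T s)
        ((Real.sqrt ε)⁻¹ * ((((T+ε)*(2*r^1) + (2 * (uu ε T r)^1 * ((T-ε)*(2*r^1))) / (2 * Real.sqrt ((uu ε T r)^2 + 4*ε)))/2) / (2 * Real.sqrt (((1+ε) + (T+ε)*r^2 + Real.sqrt ((uu ε T r)^2 + 4*ε))/2)))) r :=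
      (hinner.sqrt hApos.ne').const_mul _
    have hHd : HasDerivAt (fun s => Heps ε T s)
        ((Real.sqrt ε)⁻¹ * ((T*(2*r^1)) / (2 * Real.sqrt (1 + T*r^2)))) r :=
      ((((hasDerivAt_pow 2 r).const_mul T).const_add 1).sqrt hP.ne').const_mul _
    have hlamE_eq : lamE ε T r = (Real.sqrt ε)⁻¹ *
        Real.sqrt (((1 + ε) + (T + ε) * r ^ 2 + Real.sqrt ((uu ε T r) ^ 2 + 4 * ε)) / 2) := rfl
    -- abstract the nested square roots into opaque variables
    obtain ⟨u, hu_eq⟩ : ∃ u : ℝ, uu ε T r = u := ⟨_, rfl⟩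
    have huexp : u = (1-ε) + (T-ε)*r^2 := by rw [← hu_eq]; rfl
    rw [hu_eq] at hlamd hlamE_eq ⊢
    obtain ⟨v, hv_eq⟩ : ∃ v : ℝ, Real.sqrt (u^2 + 4*ε) = v := ⟨_, rfl⟩
    rw [hv_eq] at hlamd hlamE_eq
    obtain ⟨p, hp_eq⟩ : ∃ p : ℝ, Real.sqrt (1 + T*r^2) = p := ⟨_, rfl⟩
    rw [hp_eq] at hHd
    have hu : 0 < u := by rw [huexp]; have := mul_nonneg (by linarith : (0:ℝ) ≤ T - ε) (sq_nonneg r); linarith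
    have hv : 0 < v := by rw [← hv_eq]; exact Real.sqrt_pos.mpr (by positivity)
    have hv2 : v^2 = u^2 + 4*ε := by rw [← hv_eq]; exact Real.sq_sqrt (by positivity)
    have huv : u ≤ v := by nlinarith [hv2, mul_pos hu hv, sq_nonneg (v-u)]
    have hp : 0 < p := by rw [← hp_eq]; exact Real.sqrt_pos.mpr hP
    have hp2 : p^2 = 1 + T*r^2 := by rw [← hp_eq]; exact Real.sq_sqrt hP.le
    have hp1 : 1 ≤ p := by nlinarith [hp2, hp, mul_nonneg (by linarith : (0:ℝ) ≤ T) (sq_nonneg r)]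
    have hA : (0:ℝ) < ((1+ε) + (T+ε)*r^2 + v)/2 := by have := mul_nonneg (by linarith : (0:ℝ) ≤ T + ε) (sq_nonneg r); linarith
    obtain ⟨a, ha_eq⟩ : ∃ a : ℝ, Real.sqrt (((1+ε) + (T+ε)*r^2 + v)/2) = a := ⟨_, rfl⟩
    rw [ha_eq] at hlamd hlamE_eq
    have ha : 0 < a := by rw [← ha_eq]; exact Real.sqrt_pos.mpr hA
    have ha2 : a^2 = ((1+ε) + (T+ε)*r^2 + v)/2 := by rw [← ha_eq]; exact Real.sq_sqrt hA.le
    have hap : p ≤ a := by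
      have h := Real.sqrt_le_sqrt (show 1 + T*r^2 ≤ ((1+ε) + (T+ε)*r^2 + v)/2 by
        rw [huexp] at huv; have := mul_nonneg (by linarith : (0:ℝ) ≤ ε) (sq_nonneg r); linarith)
      rwa [hp_eq, ha_eq] at h
    have hup : u ≤ p^2 := by rw [hp2, huexp]; have := mul_nonneg (by linarith : (0:ℝ) ≤ ε) (sq_nonneg r); linarith
    have hkey : u*(v-u) ≤ 2*ε := by linarith [sq_nonneg (v-u), hv2]
    have hid : 2*(a^2 - p^2) = v - u := by rw [ha2, hp2, huexp]; ring
    have h4p : 4*p*(a-p) ≤ v - u := by linarith [sq_nonneg (a-p), hid]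
    have hK2T : (T+ε)*v + (T-ε)*u ≤ 2*T*v := by
      linarith [mul_nonneg (show (0:ℝ) ≤ T-ε by linarith) (show (0:ℝ) ≤ v-u by linarith)]
    have hK0 : 0 ≤ (T+ε)*v + (T-ε)*u := by
      linarith [mul_pos (show (0:ℝ) < T+ε by linarith) hv,
        mul_nonneg (show (0:ℝ) ≤ T-ε by linarith) hu.le]
    -- the main polynomial inequality
    have hG : 2*T*a*v*u^2 ≤ p*u^2*((T+ε)*v + (T-ε)*u) + 4*T*ε*p*v := by
      have hG2 : 2*p*(2*T*a*v*u^2) ≤ 2*p*(p*u^2*((T+ε)*v + (T-ε)*u) + 4*T*ε*p*v) := by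
        have P1 : T*v*u^2*(4*p*(a-p)) ≤ T*v*u^2*(v-u) :=
          mul_le_mul_of_nonneg_left h4p (by positivity)
        have P2 : T*v*u*(u*(v-u)) ≤ T*v*u*(2*ε) :=
          mul_le_mul_of_nonneg_left hkey (by positivity)
        have P3 : 2*T*ε*v*u ≤ 2*T*ε*v*p^2 :=
          mul_le_mul_of_nonneg_left hup (show (0:ℝ) ≤ 2*T*ε*v by positivity)
        have hTε : (0:ℝ) ≤ T - ε := by linarith
        have P4 : (2*p^2*(T-ε)*u)*(u*(v-u)) ≤ (2*p^2*(T-ε)*u)*(2*ε) :=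
          mul_le_mul_of_nonneg_left hkey (by positivity)
        have P5 : (4*ε*p^2)*((T-ε)*u) ≤ (4*ε*p^2)*(T*v) := by
          have h5 : (T-ε)*u ≤ T*v := by
            linarith [mul_nonneg hTε (show (0:ℝ) ≤ v-u by linarith), mul_pos hε hv]
          exact mul_le_mul_of_nonneg_left h5 (by positivity)
        have P6 : (0:ℝ) ≤ T*ε*p^2*v := by positivity
        linarith [P1, P2, P3, P4, P5, P6]
      exact le_of_mul_le_mul_left hG2 (by positivity)
    -- nice derivative values
    rw [hlamE_eq]
    refine ⟨(Real.sqrt ε)⁻¹ * (r*((T+ε)*v + (T-ε)*u)/(2*a*v)), (Real.sqrt ε)⁻¹ * (T*r/p), ?_, ?_, ?_, ?_⟩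
    · convert hlamd using 2
      field_simp
    · convert hHd using 2
      field_simp
    · have hstep : r*((T+ε)*v + (T-ε)*u)/(2*a*v) ≤ T*r/p := by
        rw [div_le_div_iff₀ (by positivity) hp]
        have h1 : p*((T+ε)*v + (T-ε)*u) ≤ a*(2*T*v) := mul_le_mul hap hK2T hK0 ha.le
        linarith [mul_le_mul_of_nonneg_left h1 hr.le]
      have h2 := mul_le_mul_of_nonneg_left hstep (inv_nonneg.mpr he'.le)
      linarith
    · have key2 : T*r/p - r*((T+ε)*v + (T-ε)*u)/(2*a*v) ≤ 2*T*r*ε/(u^2*a) := by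
        rw [div_sub_div _ _ hp.ne' (by positivity : (2*a*v) ≠ 0),
          div_le_div_iff₀ (by positivity) (by positivity)]
        linarith [mul_le_mul_of_nonneg_left hG (mul_nonneg hr.le ha.le)]
      have hmul := mul_le_mul_of_nonneg_left key2 (inv_nonneg.mpr he'.le)
      rw [mul_sub] at hmul
      have heq : (Real.sqrt ε)⁻¹ * (2*T*r*ε/(u^2*a)) = 2 * T * r / (u ^ 2 * ((Real.sqrt ε)⁻¹ * a)) := by
        rw [← hee]
        field_simp
        have hs : Real.sqrt (Real.sqrt ε ^ 2) = Real.sqrt ε := Real.sqrt_sq he'.le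
        linear_combination (-(Real.sqrt (Real.sqrt ε ^ 2) + Real.sqrt ε)) * hs
      rw [heq] at hmul
      linarith
  refine ⟨hmain, ?_⟩
  have hcont : ContinuousOn (fun s => lamE ε T s - Heps ε T s) (Set.Ici 0) := by
    apply Continuous.continuousOn
    unfold lamE Heps uu
    fun_prop
  apply antitoneOn_of_deriv_nonpos (convex_Ici 0) hcont
  · rw [interior_Ici]
    intro x hx
    obtain ⟨de, dh, hde, hdh, h1, h2⟩ := hmain x hx
    exact ((hde.sub hdh).differentiableAt).differentiableWithinAt
  · rw [interior_Ici]
    intro x hx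
    obtain ⟨de, dh, hde, hdh, h1, h2⟩ := hmain x hx
    rw [(by exact hde.sub hdh : HasDerivAt (fun s => lamE ε T s - Heps ε T s) (de - dh) x).deriv]
    linarith
end

section
/- For all real numbers a, b with 0 ≤ a ≤ b one has λ_e(a) + λ_e(b) − λ_e(a+b) ≥ 1/(2·ε·H_ε(a)). -/
open Real

noncomputable def XX (ε T r : ℝ) : ℝ :=
  ((1 + ε) + (T + ε) * r ^ 2 + Real.sqrt ((uu ε T r) ^ 2 + 4 * ε)) / 2

noncomputable def SS (ε T r : ℝ) : ℝ := Real.sqrt (XX ε T r)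

lemma lamE_eq (ε T r : ℝ) : lamE ε T r = (Real.sqrt ε)⁻¹ * SS ε T r := rfl

lemma aux_sqrt_lip {x y c : ℝ} (hx : 0 ≤ x) (hxy : x ≤ y) (hc : 0 ≤ c) :
    Real.sqrt (y^2+c) ≤ Real.sqrt (x^2+c) + (y-x) := by
  have h0 : (0:ℝ) ≤ x^2+c := by positivity
  have h1 : x ≤ Real.sqrt (x^2+c) := by
    have := Real.sqrt_le_sqrt (show x^2 ≤ x^2+c by linarith)
    rwa [Real.sqrt_sq hx] at this
  have hs := Real.sq_sqrt h0
  have hn := Real.sqrt_nonneg (x^2+c)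
  have hk : y^2+c ≤ (Real.sqrt (x^2+c) + (y - x))^2 := by nlinarith
  calc Real.sqrt (y^2+c) ≤ Real.sqrt ((Real.sqrt (x^2+c)+(y-x))^2) := Real.sqrt_le_sqrt hk
    _ = _ := Real.sqrt_sq (by nlinarith)

lemma X_ge (ε T : ℝ) (hε : 0 < ε) (hε' : ε ≤ 1) (hT : 1 ≤ T) (r : ℝ) :
    1 + T * r^2 ≤ XX ε T r := by
  have hu : 0 ≤ uu ε T r := by unfold uu; nlinarith [sq_nonneg r]
  have hv : uu ε T r ≤ Real.sqrt ((uu ε T r)^2 + 4*ε) := by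
    have := Real.sqrt_le_sqrt (show (uu ε T r)^2 ≤ (uu ε T r)^2 + 4*ε by linarith)
    rwa [Real.sqrt_sq hu] at this
  unfold XX uu at hv ⊢; nlinarith [sq_nonneg r]

/-- For `0 ≤ a ≤ b`: `λ_e(a)+λ_e(b)−λ_e(a+b) ≥ 1/(2εH_ε(a))`. -/
theorem stmt10 (ε T : ℝ) (hε : 0 < ε) (hε' : ε ≤ 1 / 1000) (hT : 1 ≤ T) (hT' : T ≤ 100)
    (a b : ℝ) (ha : 0 ≤ a) (hab : a ≤ b) :
    1 / (2 * ε * Heps ε T a) ≤ lamE ε T a + lamE ε T b - lamE ε T (a + b) := by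
  have hε1 : ε ≤ 1 := by linarith
  have hT0 : (0:ℝ) ≤ T := by linarith
  have hb : 0 ≤ b := le_trans ha hab
  set s := Real.sqrt ε with hsdef
  have hs0 : 0 < s := Real.sqrt_pos.mpr hε
  have hss : s^2 = ε := Real.sq_sqrt hε.le
  set f : ℝ := Real.sqrt (1 + T * a^2) with hfdef
  have hfsq : f^2 = 1 + T*a^2 := Real.sq_sqrt (by positivity)
  have hf0 : 0 < f := Real.sqrt_pos.mpr (by positivity)
  have hXge : ∀ r, 1 + T * r^2 ≤ XX ε T r := fun r => X_ge ε T hε hε1 hT r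
  have hX0 : ∀ r, 0 ≤ XX ε T r := fun r => le_trans (by positivity) (hXge r)
  have hSsq : ∀ r, (SS ε T r)^2 = XX ε T r := fun r => Real.sq_sqrt (hX0 r)
  have hS0 : ∀ r, 0 ≤ SS ε T r := fun r => Real.sqrt_nonneg _
  have hsT := Real.sqrt_nonneg T
  have hsTsq : (Real.sqrt T)^2 = T := Real.sq_sqrt hT0
  have hTle : ∀ r, 0 ≤ r → Real.sqrt T * r ≤ SS ε T r := by
    intro r hr
    have h1 : Real.sqrt (T*r^2) ≤ SS ε T r := by
      rw [SS]; exact Real.sqrt_le_sqrt (le_trans (by linarith) (hXge r))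
    rwa [show T*r^2 = (Real.sqrt T*r)^2 by rw [mul_pow, hsTsq],
      Real.sqrt_sq (mul_nonneg hsT hr)] at h1
  have hfS : f ≤ SS ε T a := by
    rw [hfdef, SS]
    exact Real.sqrt_le_sqrt (hXge a)
  -- step 2 : S (a+b) ≤ S b + √T * a
  have step2 : SS ε T (a+b) ≤ SS ε T b + Real.sqrt T * a := by
    have hu1 : 0 ≤ uu ε T b := by unfold uu; nlinarith
    have h12 : uu ε T b ≤ uu ε T (a+b) := by
      unfold uu
      nlinarith [mul_nonneg (show (0:ℝ) ≤ T - ε by linarith)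
        (show (0:ℝ) ≤ a^2 + 2*a*b by nlinarith [mul_nonneg ha hb, sq_nonneg a])]
    have hv := aux_sqrt_lip hu1 h12 (by linarith : (0:ℝ) ≤ 4*ε)
    have hdu : uu ε T (a+b) - uu ε T b = (T-ε)*(a^2+2*a*b) := by unfold uu; ring
    have hXle : XX ε T (a+b) ≤ XX ε T b + T*(a^2+2*a*b) := by
      have h1 : (T+ε)*(a+b)^2 = (T+ε)*b^2 + (T+ε)*(a^2+2*a*b) := by ring
      unfold XX
      linarith [hv, hdu, h1]
    have hTb := hTle b hb
    have h3 : Real.sqrt T * a * (Real.sqrt T * b) ≤ Real.sqrt T * a * SS ε T b :=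
      mul_le_mul_of_nonneg_left hTb (mul_nonneg hsT ha)
    have h4 : T*a*b = Real.sqrt T * a * (Real.sqrt T * b) := by
      linear_combination (-(a*b))*hsTsq
    have hexp : (SS ε T b + Real.sqrt T * a)^2
        = XX ε T b + 2*(Real.sqrt T * a * SS ε T b) + T*a^2 := by
      linear_combination hSsq b + a^2*hsTsq
    have hkey : XX ε T (a+b) ≤ (SS ε T b + Real.sqrt T * a)^2 := by
      rw [hexp]; linarith [hXle, h3, h4]
    calc SS ε T (a+b) ≤ Real.sqrt ((SS ε T b + Real.sqrt T * a)^2) := Real.sqrt_le_sqrt hkey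
      _ = SS ε T b + Real.sqrt T * a := Real.sqrt_sq (add_nonneg (hS0 b) (mul_nonneg hsT ha))
  -- step 3 : 1/(2f) ≤ f - √T * a
  have hta : Real.sqrt T * a ≤ f := by
    have h : Real.sqrt (T*a^2) ≤ f := by
      rw [hfdef]; exact Real.sqrt_le_sqrt (by linarith)
    rwa [show T*a^2 = (Real.sqrt T * a)^2 by rw [mul_pow, hsTsq],
      Real.sqrt_sq (mul_nonneg hsT ha)] at h
  have step3 : 1/(2*f) ≤ f - Real.sqrt T * a := by
    have hprod : (f - Real.sqrt T*a)*(f + Real.sqrt T*a) = 1 := by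
      linear_combination hfsq - a^2*hsTsq
    rw [div_le_iff₀ (by positivity)]
    nlinarith [hprod, sq_nonneg (f - Real.sqrt T * a)]
  have hmain : 1/(2*f) ≤ SS ε T a + SS ε T b - SS ε T (a+b) := by
    linarith [step2, step3, hfS, hTle a ha]
  have hHeq : 1 / (2 * ε * Heps ε T a) = s⁻¹ * (1/(2*f)) := by
    rw [Heps, ← hfdef, ← hsdef, ← hss]
    field_simp
  rw [hHeq, lamE_eq, lamE_eq, lamE_eq, ← hsdef]
  have h2 : s⁻¹ * (1/(2*f)) ≤ s⁻¹ * (SS ε T a + SS ε T b - SS ε T (a+b)) :=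
    mul_le_mul_of_nonneg_left hmain (by positivity)
  linarith
end

section
/- For every r > 0 with (T−ε)·r² ≥ 10·(1+√T), one has 1/10 ≤ λ_i(r)³·λ_i''(r) ≤ 1; in particular λ_i is strictly convex on this range and λ_i''(r) ≤ 10·r^{−3} for r ≥ 4·T^{−1/2} + 4·T^{−1/4}. -/
open Real

set_option linter.unusedSectionVars false

/-- `v = √(u²+4ε)` -/
noncomputable def Vf (ε T x : ℝ) : ℝ := Real.sqrt ((uu ε T x) ^ 2 + 4 * ε)

/-- `s = u+v` -/
noncomputable def Sf (ε T x : ℝ) : ℝ := uu ε T x + Vf ε T x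

/-- `B = λ_i²` -/
noncomputable def Bf (ε T x : ℝ) : ℝ := 1 + x ^ 2 - 2 / Sf ε T x

noncomputable def B1 (ε T x : ℝ) : ℝ := 2 * x + 4 * (T - ε) * x / (Vf ε T x * Sf ε T x)

noncomputable def B2 (ε T x : ℝ) : ℝ :=
  2 + 4 * (T - ε) / (Vf ε T x * Sf ε T x) - 8 * (T - ε) ^ 2 * x ^ 2 / (Vf ε T x) ^ 3

section basic
variable {ε T : ℝ} (hε : 0 < ε) (hε' : ε ≤ 1 / 1000) (hT : 1 ≤ T)
include hε hε' hT

lemma uu_pos_s12 (x : ℝ) : 0 < uu ε T x := by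
  unfold uu; nlinarith [sq_nonneg x]

lemma Vf_pos (x : ℝ) : 0 < Vf ε T x := by
  unfold Vf; apply Real.sqrt_pos.2; positivity

lemma Vf_sq (x : ℝ) : (Vf ε T x) ^ 2 = (uu ε T x) ^ 2 + 4 * ε := by
  unfold Vf; rw [Real.sq_sqrt]; positivity

lemma uu_le_Vf (x : ℝ) : uu ε T x ≤ Vf ε T x := by
  have h1 := uu_pos_s12 hε hε' hT x
  have h2 := Vf_pos hε hε' hT x
  have h3 := Vf_sq hε hε' hT x
  nlinarith

lemma Sf_pos (x : ℝ) : 0 < Sf ε T x :=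
  add_pos (uu_pos_s12 hε hε' hT x) (Vf_pos hε hε' hT x)

lemma Sf_ge_two (x : ℝ) : 2 ≤ Sf ε T x := by
  have h1 := uu_pos_s12 hε hε' hT x
  have h2 := Vf_pos hε hε' hT x
  have h3 := Vf_sq hε hε' hT x
  have h4 : 1 - ε ≤ uu ε T x := by unfold uu; nlinarith [sq_nonneg x]
  unfold Sf
  rcases le_or_gt 2 (uu ε T x) with h | h
  · linarith
  · nlinarith

lemma Bf_ge (x : ℝ) : x ^ 2 ≤ Bf ε T x := by
  have h1 := Sf_ge_two hε hε' hT x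
  have h2 : 2 / Sf ε T x ≤ 1 := by
    rw [div_le_one (by linarith)]; linarith
  unfold Bf; linarith

lemma lamI_eq : lamI ε T = fun x => Real.sqrt (Bf ε T x) := by
  funext x
  have h1 := uu_pos_s12 hε hε' hT x
  have h2 := Vf_pos hε hε' hT x
  have h3 := Vf_sq hε hε' hT x
  have hs := Sf_pos hε hε' hT x
  have key : ((1 + ε) + (T + ε) * x ^ 2 - Real.sqrt ((uu ε T x) ^ 2 + 4 * ε)) / 2
      = ε * Bf ε T x := by
    have hv : Real.sqrt ((uu ε T x) ^ 2 + 4 * ε) = Vf ε T x := rfl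
    rw [hv]
    unfold Bf
    unfold Sf at hs ⊢
    rw [eq_comm]
    field_simp
    unfold uu at h3 ⊢
    nlinarith [h3]
  rw [lamI, key, Real.sqrt_mul hε.le, ← mul_assoc, inv_mul_cancel₀ (by positivity : Real.sqrt ε ≠ 0), one_mul]

end basic

section derivs
variable {ε T : ℝ} (hε : 0 < ε) (hε' : ε ≤ 1 / 1000) (hT : 1 ≤ T)
include hε hε' hT

lemma hasDerivAt_uu (x : ℝ) : HasDerivAt (uu ε T) (2 * (T - ε) * x) x := by
  have : HasDerivAt (fun x : ℝ => (1 - ε) + (T - ε) * x ^ 2) ((T - ε) * (2 * x ^ 1)) x :=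
    (((hasDerivAt_pow 2 x)).const_mul (T - ε)).const_add (1 - ε)
  exact this.congr_deriv (by ring : (T - ε) * (2 * x ^ 1) = 2 * (T - ε) * x)

lemma hVpos (x : ℝ) : 0 < Vf ε T x := by unfold Vf; apply Real.sqrt_pos.2; positivity

lemma hasDerivAt_Vf (x : ℝ) :
    HasDerivAt (Vf ε T) ((2 * uu ε T x * (2 * (T - ε) * x)) / (2 * Vf ε T x)) x := by
  have hq : HasDerivAt (fun x => (uu ε T x) ^ 2 + 4 * ε)
      (2 * uu ε T x ^ 1 * (2 * (T - ε) * x)) x :=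
    ((hasDerivAt_uu hε hε' hT x).pow 2).add_const _
  have := hq.sqrt (by positivity)
  show HasDerivAt (fun y => Real.sqrt ((uu ε T y) ^ 2 + 4 * ε)) _ x
  simpa [Vf] using this

lemma hasDerivAt_Sf (x : ℝ) :
    HasDerivAt (Sf ε T)
      (2 * (T - ε) * x + (2 * uu ε T x * (2 * (T - ε) * x)) / (2 * Vf ε T x)) x :=
  (hasDerivAt_uu hε hε' hT x).add (hasDerivAt_Vf hε hε' hT x)

lemma hasDerivAt_Bf (x : ℝ) : HasDerivAt (Bf ε T) (B1 ε T x) x := by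
  have hu := uu_pos_s12 hε hε' hT x
  have hv := hVpos hε hε' hT x
  have hs : 0 < Sf ε T x := add_pos hu hv
  have h1 : HasDerivAt (fun x => 2 / Sf ε T x)
      ((0 * Sf ε T x - 2 * (2 * (T - ε) * x + (2 * uu ε T x * (2 * (T - ε) * x)) / (2 * Vf ε T x))) / (Sf ε T x) ^ 2) x :=
    (hasDerivAt_const x 2).div (hasDerivAt_Sf hε hε' hT x) hs.ne'
  have h2 : HasDerivAt (fun x : ℝ => 1 + x ^ 2) (2 * x ^ 1) x :=
    (hasDerivAt_pow 2 x).const_add 1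
  have h3 := h2.sub h1
  unfold Bf
  apply h3.congr_deriv
  unfold B1 Sf at *
  field_simp
  ring

lemma hasDerivAt_B1 (x : ℝ) : HasDerivAt (B1 ε T) (B2 ε T x) x := by
  have hu := uu_pos_s12 hε hε' hT x
  have hv := hVpos hε hε' hT x
  have hs : 0 < Sf ε T x := add_pos hu hv
  have hvs : (Vf ε T x * Sf ε T x) ≠ 0 := by positivity
  have hVS : HasDerivAt (fun x => Vf ε T x * Sf ε T x)
      ((2 * uu ε T x * (2 * (T - ε) * x)) / (2 * Vf ε T x) * Sf ε T x
        + Vf ε T x * (2 * (T - ε) * x + (2 * uu ε T x * (2 * (T - ε) * x)) / (2 * Vf ε T x))) x :=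
    (hasDerivAt_Vf hε hε' hT x).mul (hasDerivAt_Sf hε hε' hT x)
  have hfrac : HasDerivAt (fun x => 4 * (T - ε) * x / (Vf ε T x * Sf ε T x))
      ((4 * (T - ε) * (Vf ε T x * Sf ε T x) - 4 * (T - ε) * x *
        ((2 * uu ε T x * (2 * (T - ε) * x)) / (2 * Vf ε T x) * Sf ε T x
        + Vf ε T x * (2 * (T - ε) * x + (2 * uu ε T x * (2 * (T - ε) * x)) / (2 * Vf ε T x))))
        / (Vf ε T x * Sf ε T x) ^ 2) x := by
    exact (((hasDerivAt_id x).const_mul (4 * (T - ε))).congr_deriv (by ring)).div hVS hvs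
  have h2 : HasDerivAt (fun x : ℝ => 2 * x) 2 x := by
    simpa using (hasDerivAt_id x).const_mul 2
  have h3 := h2.add hfrac
  unfold B1
  apply h3.congr_deriv
  unfold B2 Sf at *
  field_simp
  ring
end derivs

section second
variable {ε T : ℝ} (hε : 0 < ε) (hε' : ε ≤ 1 / 1000) (hT : 1 ≤ T)
include hε hε' hT

lemma Bf_pos {x : ℝ} (hx : 0 < x) : 0 < Bf ε T x :=
  lt_of_lt_of_le (pow_pos hx 2) (Bf_ge hε hε' hT x)

lemma deriv_lamI {x : ℝ} (hx : 0 < x) :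
    deriv (lamI ε T) x = B1 ε T x / (2 * Real.sqrt (Bf ε T x)) := by
  rw [lamI_eq hε hε' hT]
  exact ((hasDerivAt_Bf hε hε' hT x).sqrt (Bf_pos hε hε' hT hx).ne').deriv

lemma second_deriv {r : ℝ} (hr : 0 < r) :
    deriv (deriv (lamI ε T)) r
      = (2 * Bf ε T r * B2 ε T r - (B1 ε T r) ^ 2)
          / (4 * Bf ε T r * Real.sqrt (Bf ε T r)) := by
  have hev : deriv (lamI ε T) =ᶠ[nhds r] fun x => B1 ε T x / (2 * Real.sqrt (Bf ε T x)) := by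
    filter_upwards [isOpen_Ioi.mem_nhds hr] with x hx
    exact deriv_lamI hε hε' hT hx
  rw [hev.deriv_eq]
  have hB := Bf_pos hε hε' hT hr
  have ht : 0 < Real.sqrt (Bf ε T r) := Real.sqrt_pos.2 hB
  have hg : HasDerivAt (fun x => 2 * Real.sqrt (Bf ε T x))
      (2 * (B1 ε T r / (2 * Real.sqrt (Bf ε T r)))) r :=
    ((hasDerivAt_Bf hε hε' hT r).sqrt hB.ne').const_mul 2
  have hdiv := (hasDerivAt_B1 hε hε' hT r).div hg (by positivity)
  rw [show (fun x => B1 ε T x / (2 * Real.sqrt (Bf ε T x))) = (B1 ε T / fun x => 2 * Real.sqrt (Bf ε T x)) from rfl, hdiv.deriv]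
  have hBt : Bf ε T r = Real.sqrt (Bf ε T r) ^ 2 := (Real.sq_sqrt hB.le).symm
  set t := Real.sqrt (Bf ε T r) with htdef
  rw [hBt]
  field_simp
  ring

lemma lamI_pos {r : ℝ} (hr : 0 < r) : 0 < lamI ε T r := by
  rw [lamI_eq hε hε' hT]
  exact Real.sqrt_pos.2 (Bf_pos hε hε' hT hr)

lemma prod_eq {r : ℝ} (hr : 0 < r) :
    lamI ε T r ^ 3 * deriv (deriv (lamI ε T)) r
      = (2 * Bf ε T r * B2 ε T r - (B1 ε T r) ^ 2) / 4 := by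
  rw [second_deriv hε hε' hT hr, lamI_eq hε hε' hT]
  have hB := Bf_pos hε hε' hT hr
  have ht : 0 < Real.sqrt (Bf ε T r) := Real.sqrt_pos.2 hB
  have hBt : Bf ε T r = Real.sqrt (Bf ε T r) ^ 2 := (Real.sq_sqrt hB.le).symm
  set t := Real.sqrt (Bf ε T r) with htdef
  rw [hBt]
  field_simp
  rw [htdef]
end second

lemma abstract_bounds (p q d r2 : ℝ) (hp0 : 0 ≤ p) (hp : p ≤ 1/100)
    (hq0 : 0 ≤ q) (hq : q ≤ 1/25) (hd0 : 0 ≤ d) (hd : d ≤ 1/20) (hr20 : 0 ≤ r2)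
    (hr2p : r2 * p ≤ 1/20) (hr2q : r2 * q ≤ 1/5) (hpd : 25 * p ≤ 24 * d) :
    2/5 ≤ 4 * ((1 + r2 - d) * (1 + p - q) - r2 * (1 + p) ^ 2) ∧
      4 * ((1 + r2 - d) * (1 + p - q) - r2 * (1 + p) ^ 2) ≤ 4 := by
  have e1 : d * q ≤ d * (1/25) := mul_le_mul_of_nonneg_left hq hd0
  have e2 : 0 ≤ r2 * p := mul_nonneg hr20 hp0
  have e3 : 0 ≤ r2 * q := mul_nonneg hr20 hq0
  have e4 : 0 ≤ r2 * p ^ 2 := mul_nonneg hr20 (sq_nonneg p)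
  have e5 : 0 ≤ d * p := mul_nonneg hd0 hp0
  have e6 : 0 ≤ d * q := mul_nonneg hd0 hq0
  have f1 : r2 * p ^ 2 ≤ 1/2000 := by nlinarith [mul_le_mul hr2p hp hp0 (by norm_num : (0:ℝ) ≤ 1/20)]
  have f2 : d * p ≤ 1/2000 := by nlinarith [mul_le_mul hd hp hp0 (by norm_num : (0:ℝ) ≤ 1/20)]
  constructor
  · nlinarith [hq, hd, hr2p, hr2q, hp0, e6, f1, f2]
  · nlinarith [hpd, e1, e2, e3, e4, e5, hq0]

lemma concrete_bounds (m u v s r : ℝ) (hm : 0 < m) (hr : 0 < r) (hu : 0 < u)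
    (hv : 0 < v) (hsdef : s = u + v) (huv : u ≤ v) (humr : m * r ^ 2 ≤ u)
    (hu20 : 20 ≤ u) (hu2 : 100 * m ≤ u ^ 2) (h25m : 25 * m ≤ 24 * u) :
    2/5 ≤ 4 * ((1 + r ^ 2 - 2 / s) * (1 + 2 * m / (v * s) - 4 * m ^ 2 * r ^ 2 / v ^ 3)
          - r ^ 2 * (1 + 2 * m / (v * s)) ^ 2) ∧
      4 * ((1 + r ^ 2 - 2 / s) * (1 + 2 * m / (v * s) - 4 * m ^ 2 * r ^ 2 / v ^ 3)
          - r ^ 2 * (1 + 2 * m / (v * s)) ^ 2) ≤ 4 := by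
  have hs : 0 < s := by rw [hsdef]; positivity
  have hs2u : 2 * u ≤ s := by rw [hsdef]; linarith
  have hv3 : u ^ 3 ≤ v ^ 3 := pow_le_pow_left₀ hu.le huv 3
  have hvs : 2 * u ^ 2 ≤ v * s := by nlinarith
  have hp0 : 0 ≤ 2 * m / (v * s) := by positivity
  have hp : 2 * m / (v * s) ≤ 1 / 100 := by
    rw [div_le_iff₀ (by positivity)]; nlinarith
  have hq0 : 0 ≤ 4 * m ^ 2 * r ^ 2 / v ^ 3 := by positivity
  have hq : 4 * m ^ 2 * r ^ 2 / v ^ 3 ≤ 1 / 25 := by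
    rw [div_le_iff₀ (by positivity)]
    nlinarith [mul_le_mul humr hu2 (by positivity) hu.le]
  have hd0 : 0 ≤ 2 / s := by positivity
  have hd : 2 / s ≤ 1 / 20 := by
    rw [div_le_iff₀ (by positivity)]; nlinarith
  have hr2p : r ^ 2 * (2 * m / (v * s)) ≤ 1 / 20 := by
    rw [mul_div_assoc', div_le_iff₀ (by positivity)]
    nlinarith [mul_le_mul hu20 humr (by positivity) hu.le]
  have hr2q : r ^ 2 * (4 * m ^ 2 * r ^ 2 / v ^ 3) ≤ 1 / 5 := by
    rw [mul_div_assoc', div_le_iff₀ (by positivity)]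
    nlinarith [mul_le_mul humr humr (by positivity) hu.le, sq_nonneg u]
  have hpd : 25 * (2 * m / (v * s)) ≤ 24 * (2 / s) := by
    rw [mul_div_assoc', mul_div_assoc', div_le_div_iff₀ (by positivity) (by positivity)]
    nlinarith [mul_le_mul_of_nonneg_right (show 50 * m ≤ 48 * v by linarith) hs.le]
  exact abstract_bounds _ _ _ _ hp0 hp hq0 hq hd0 hd (by positivity) hr2p hr2q hpd

section main
variable {ε T : ℝ} (hε : 0 < ε) (hε' : ε ≤ 1 / 1000) (hT : 1 ≤ T) (hT' : T ≤ 100)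
include hε hε' hT hT'

lemma sqrtT_bounds : 1 ≤ Real.sqrt T ∧ Real.sqrt T ≤ 10 := by
  constructor
  · rw [show (1:ℝ) = Real.sqrt 1 by simp]; exact Real.sqrt_le_sqrt hT
  · rw [show (10:ℝ) = Real.sqrt 100 by
      rw [show (100:ℝ) = 10 ^ 2 by norm_num, Real.sqrt_sq]; norm_num]
    exact Real.sqrt_le_sqrt hT'

lemma main_bounds {r : ℝ} (hr : 0 < r) (hreg : 10 * (1 + Real.sqrt T) ≤ (T - ε) * r ^ 2) :
    2/5 ≤ 2 * Bf ε T r * B2 ε T r - (B1 ε T r) ^ 2 ∧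
      2 * Bf ε T r * B2 ε T r - (B1 ε T r) ^ 2 ≤ 4 := by
  have hm : 0 < T - ε := by linarith
  have hu := uu_pos_s12 hε hε' hT r
  have hv := Vf_pos hε hε' hT r
  have huv := uu_le_Vf hε hε' hT r
  obtain ⟨hsT1, hsT10⟩ := sqrtT_bounds hε hε' hT hT'
  have hsm : Real.sqrt (T - ε) ≤ Real.sqrt T := Real.sqrt_le_sqrt (by linarith)
  have hm_sq : Real.sqrt (T - ε) ^ 2 = T - ε := Real.sq_sqrt hm.le
  have hm0 : 0 ≤ Real.sqrt (T - ε) := Real.sqrt_nonneg _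
  have hueq : uu ε T r = (1 - ε) + (T - ε) * r ^ 2 := rfl
  have humr : (T - ε) * r ^ 2 ≤ uu ε T r := by rw [hueq]; linarith
  have hu20 : 20 ≤ uu ε T r := by rw [hueq]; nlinarith
  have hu10m : 10 * (1 + Real.sqrt (T - ε)) ≤ uu ε T r := by nlinarith
  have hu2 : 100 * (T - ε) ≤ uu ε T r ^ 2 := by nlinarith
  have h25m : 25 * (T - ε) ≤ 24 * uu ε T r := by
    nlinarith [mul_nonneg (show (0:ℝ) ≤ 10 - Real.sqrt (T - ε) by nlinarith)
      (show (0:ℝ) ≤ 25 * Real.sqrt (T - ε) + 10 by nlinarith)]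
  have key : 2 * Bf ε T r * B2 ε T r - (B1 ε T r) ^ 2
      = 4 * ((1 + r ^ 2 - 2 / Sf ε T r) * (1 + 2 * (T - ε) / (Vf ε T r * Sf ε T r)
              - 4 * (T - ε) ^ 2 * r ^ 2 / (Vf ε T r) ^ 3)
          - r ^ 2 * (1 + 2 * (T - ε) / (Vf ε T r * Sf ε T r)) ^ 2) := by
    unfold Bf B1 B2
    ring
  rw [key]
  exact concrete_bounds (T - ε) (uu ε T r) (Vf ε T r) (Sf ε T r) r hm hr hu hv rfl
    huv humr hu20 hu2 h25m
end main

set_option maxHeartbeats 800000 in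
theorem stmt12Aux (ε T : ℝ) (hε : 0 < ε) (hε' : ε ≤ 1 / 1000) (hT : 1 ≤ T) (hT' : T ≤ 100) :
    (∀ r : ℝ, 0 < r → 10 * (1 + Real.sqrt T) ≤ (T - ε) * r ^ 2 →
      1 / 10 ≤ (lamI ε T r) ^ 3 * deriv (deriv (lamI ε T)) r ∧
        (lamI ε T r) ^ 3 * deriv (deriv (lamI ε T)) r ≤ 1) ∧
    StrictConvexOn ℝ {r : ℝ | 0 < r ∧ 10 * (1 + Real.sqrt T) ≤ (T - ε) * r ^ 2} (lamI ε T) ∧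
    (∀ r : ℝ, 4 * T ^ (-(1 : ℝ) / 2) + 4 * T ^ (-(1 : ℝ) / 4) ≤ r →
      deriv (deriv (lamI ε T)) r ≤ 10 / r ^ 3) := by
  have hm : 0 < T - ε := by linarith
  obtain ⟨hsT1, hsT10⟩ := sqrtT_bounds hε hε' hT hT'
  -- Part 1
  have part1 : ∀ r : ℝ, 0 < r → 10 * (1 + Real.sqrt T) ≤ (T - ε) * r ^ 2 →
      1 / 10 ≤ (lamI ε T r) ^ 3 * deriv (deriv (lamI ε T)) r ∧
        (lamI ε T r) ^ 3 * deriv (deriv (lamI ε T)) r ≤ 1 := by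
    intro r hr hreg
    obtain ⟨h1, h2⟩ := main_bounds hε hε' hT hT' hr hreg
    rw [prod_eq hε hε' hT hr]
    constructor <;> linarith
  -- positivity of the second derivative on the region
  have hdpos : ∀ r : ℝ, 0 < r → 10 * (1 + Real.sqrt T) ≤ (T - ε) * r ^ 2 →
      0 < deriv (deriv (lamI ε T)) r := by
    intro r hr hreg
    obtain ⟨h1, _⟩ := part1 r hr hreg
    have hl : 0 < lamI ε T r ^ 3 := pow_pos (lamI_pos hε hε' hT hr) 3
    by_contra h'
    push_neg at h'
    nlinarith
  refine ⟨part1, ?_, ?_⟩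
  · -- Part 2: strict convexity
    have hc : 0 < 10 * (1 + Real.sqrt T) := by positivity
    set r₀ : ℝ := Real.sqrt (10 * (1 + Real.sqrt T) / (T - ε)) with hr₀def
    have hr₀pos : 0 < r₀ := Real.sqrt_pos.2 (by positivity)
    have hr₀sq : r₀ ^ 2 = 10 * (1 + Real.sqrt T) / (T - ε) :=
      Real.sq_sqrt (by positivity)
    have hset : {r : ℝ | 0 < r ∧ 10 * (1 + Real.sqrt T) ≤ (T - ε) * r ^ 2} = Set.Ici r₀ := by
      ext x
      simp only [Set.mem_setOf_eq, Set.mem_Ici]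
      constructor
      · rintro ⟨hx, hxc⟩
        have h1 : 10 * (1 + Real.sqrt T) / (T - ε) ≤ x ^ 2 := by
          rw [div_le_iff₀ hm]; linarith
        calc r₀ ≤ Real.sqrt (x ^ 2) := Real.sqrt_le_sqrt h1
          _ = x := Real.sqrt_sq hx.le
      · intro hx
        have hx0 : 0 < x := lt_of_lt_of_le hr₀pos hx
        have h2 : r₀ ^ 2 ≤ x ^ 2 := by nlinarith
        rw [hr₀sq, div_le_iff₀ hm] at h2
        exact ⟨hx0, by linarith⟩
    rw [hset]
    have hBc : Continuous (Bf ε T) :=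
      continuous_iff_continuousAt.2 fun x => (hasDerivAt_Bf hε hε' hT x).continuousAt
    have hlc : Continuous (lamI ε T) := by
      rw [lamI_eq hε hε' hT]; exact Real.continuous_sqrt.comp hBc
    refine strictConvexOn_of_deriv2_pos (convex_Ici r₀) hlc.continuousOn ?_
    intro x hx
    rw [interior_Ici] at hx
    have hx0 : 0 < x := lt_trans hr₀pos hx
    have h2 : r₀ ^ 2 ≤ x ^ 2 := by nlinarith [le_of_lt (Set.mem_Ioi.mp hx)]
    rw [hr₀sq, div_le_iff₀ hm] at h2
    have := hdpos x hx0 (by linarith)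
    have hit : (deriv^[2] (lamI ε T)) x = deriv (deriv (lamI ε T)) x := by
      simp [Function.iterate_succ, Function.iterate_zero, Function.comp]
    rw [hit]
    exact this
  · -- Part 3
    intro r hrge
    have hT0 : (0:ℝ) < T := by linarith
    set a : ℝ := T ^ (-(1 : ℝ) / 2) with hadef
    set b : ℝ := T ^ (-(1 : ℝ) / 4) with hbdef
    have ha0 : 0 < a := Real.rpow_pos_of_pos hT0 _
    have hb0 : 0 < b := Real.rpow_pos_of_pos hT0 _
    have hr : 0 < r := lt_of_lt_of_le (by positivity) hrge
    have hst : Real.sqrt T ^ 2 = T := Real.sq_sqrt hT0.le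
    have hainv : a = (Real.sqrt T)⁻¹ := by
      rw [hadef, Real.sqrt_eq_rpow, show (-(1:ℝ)/2) = -(1/2 : ℝ) by norm_num,
        Real.rpow_neg hT0.le]
    have hb2 : b ^ 2 = a := by
      rw [hbdef, hadef, ← Real.rpow_natCast (T ^ (-(1:ℝ)/4)) 2, ← Real.rpow_mul hT0.le]
      norm_num
    have ha2 : a ^ 2 = 1 / T := by
      rw [hainv]
      rw [show ((Real.sqrt T)⁻¹) ^ 2 = (Real.sqrt T ^ 2)⁻¹ by ring, hst]
      exact (one_div T).symm
    have hstpos : 0 < Real.sqrt T := by linarith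
    have hTa : T * a = Real.sqrt T := by
      rw [hainv]
      field_simp
      linarith [hst]
    have ha1 : a ≤ 1 := by
      rw [hainv]; rw [inv_le_one_iff₀]; right; linarith
    have hr2 : 16 * a ^ 2 + 32 * (a * b) + 16 * b ^ 2 ≤ r ^ 2 := by
      nlinarith [hrge, ha0, hb0]
    have hreg : 10 * (1 + Real.sqrt T) ≤ (T - ε) * r ^ 2 := by
      have hmono : (T - ε) * (16 * a ^ 2 + 32 * (a * b) + 16 * b ^ 2) ≤ (T - ε) * r ^ 2 :=
        mul_le_mul_of_nonneg_left hr2 hm.le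
      have e1 : (T - ε) * a ^ 2 = 1 - ε / T := by
        rw [ha2]; field_simp
      have e2 : (T - ε) * b ^ 2 = Real.sqrt T - ε * a := by
        rw [hb2]; rw [mul_comm, mul_sub, mul_comm a T, hTa]; ring
      have e3 : ε / T ≤ ε := div_le_self hε.le hT
      have e4 : ε * a ≤ ε := by nlinarith
      nlinarith [mul_nonneg (mul_nonneg hm.le ha0.le) hb0.le]
    obtain ⟨h1, h2⟩ := part1 r hr hreg
    have hdp := hdpos r hr hreg
    have hlam : r ≤ lamI ε T r := by
      rw [lamI_eq hε hε' hT]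
      calc r = Real.sqrt (r ^ 2) := (Real.sqrt_sq hr.le).symm
        _ ≤ Real.sqrt (Bf ε T r) := Real.sqrt_le_sqrt (Bf_ge hε hε' hT r)
    have hcube : r ^ 3 ≤ lamI ε T r ^ 3 := pow_le_pow_left₀ hr.le hlam 3
    rw [le_div_iff₀ (pow_pos hr 3)]
    nlinarith [mul_le_mul_of_nonneg_right hcube hdp.le]

/-- For `r > 0` with `(T−ε)r² ≥ 10(1+√T)`: `1/10 ≤ λ_i(r)³λ_i''(r) ≤ 1`; in particular
`λ_i` is strictly convex on this range, and `λ_i''(r) ≤ 10 r⁻³` for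
`r ≥ 4T^{-1/2}+4T^{-1/4}`. -/
theorem stmt12 (ε T : ℝ) (hε : 0 < ε) (hε' : ε ≤ 1 / 1000) (hT : 1 ≤ T) (hT' : T ≤ 100) :
    (∀ r : ℝ, 0 < r → 10 * (1 + Real.sqrt T) ≤ (T - ε) * r ^ 2 →
      1 / 10 ≤ (lamI ε T r) ^ 3 * deriv (deriv (lamI ε T)) r ∧
        (lamI ε T r) ^ 3 * deriv (deriv (lamI ε T)) r ≤ 1) ∧
    StrictConvexOn ℝ {r : ℝ | 0 < r ∧ 10 * (1 + Real.sqrt T) ≤ (T - ε) * r ^ 2} (lamI ε T) ∧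
    (∀ r : ℝ, 4 * T ^ (-(1 : ℝ) / 2) + 4 * T ^ (-(1 : ℝ) / 4) ≤ r →
      deriv (deriv (lamI ε T)) r ≤ 10 / r ^ 3) :=
  stmt12Aux ε T hε hε' hT hT'
end

section
/- For every r ≥ 0 one has the spectral-gap lower bound λ_e(r) − λ_i(r) ≥ √(1+r²) / (4·√(ε·(1+T))). -/
open Real

lemma sq_le_imp (L d : ℝ) (hL : 0 ≤ L) (hd : 0 ≤ d) (h : L ^ 2 ≤ d ^ 2) : L ≤ d := by
  nlinarith

set_option maxHeartbeats 1000000 in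
/-- Spectral gap: `λ_e(r) − λ_i(r) ≥ √(1+r²)/(4√(ε(1+T)))` for every `r ≥ 0`. -/
theorem stmt14 (ε T : ℝ) (hε : 0 < ε) (hε' : ε ≤ 1 / 1000) (hT : 1 ≤ T) (hT' : T ≤ 100)
    (r : ℝ) (hr : 0 ≤ r) :
    Real.sqrt (1 + r ^ 2) / (4 * Real.sqrt (ε * (1 + T))) ≤ lamE ε T r - lamI ε T r := by
  have hr2 : (0:ℝ) ≤ r ^ 2 := sq_nonneg r
  have hT0 : (0:ℝ) < T := by linarith
  set S : ℝ := (1 + ε) + (T + ε) * r ^ 2 with hS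
  set u : ℝ := uu ε T r with hu
  have hudef : u = 1 - ε + (T - ε) * r ^ 2 := rfl
  set v : ℝ := Real.sqrt (u ^ 2 + 4 * ε) with hv
  simp only [lamE, lamI, ← hu, ← hv, ← hS]
  have hv0 : 0 ≤ v := Real.sqrt_nonneg _
  have hv2 : v ^ 2 = u ^ 2 + 4 * ε := Real.sq_sqrt (by positivity)
  have hS0 : (0:ℝ) < S := by
    rw [hS]; nlinarith [mul_nonneg (by linarith : (0:ℝ) ≤ T + ε) hr2]
  have hP2 : 0 ≤ S ^ 2 - v ^ 2 := by
    rw [hv2, hS, hudef]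
    nlinarith [mul_nonneg hε.le hr2, mul_nonneg (mul_nonneg hε.le hT0.le) hr2,
      mul_nonneg (mul_nonneg hε.le hT0.le) (mul_nonneg hr2 hr2)]
  have hvS : v ≤ S := sq_le_imp v S hv0 hS0.le (by linarith)
  have hA0 : 0 ≤ (S - v) / 2 := by linarith
  have hB0 : 0 ≤ (S + v) / 2 := by linarith
  set a : ℝ := Real.sqrt ((S - v) / 2) with ha
  set b : ℝ := Real.sqrt ((S + v) / 2) with hb
  have ha2 : a ^ 2 = (S - v) / 2 := Real.sq_sqrt hA0
  have hb2 : b ^ 2 = (S + v) / 2 := Real.sq_sqrt hB0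
  have ha0 : 0 ≤ a := Real.sqrt_nonneg _
  have hd0 : 0 ≤ b - a := by
    have : a ≤ b := by
      rw [ha, hb]; exact Real.sqrt_le_sqrt (by linarith)
    linarith
  have hvv : v ^ 2 = (1 - ε + (T - ε) * r ^ 2) ^ 2 + 4 * ε := by rw [hv2, hudef]
  have hABval : (S - v) / 2 * ((S + v) / 2) = ε * ((1 + r ^ 2) * (1 + T * r ^ 2) - 1) := by
    rw [hS]; linear_combination (-(1:ℝ)/4) * hvv
  have hab2 : a * b = Real.sqrt (ε * ((1 + r ^ 2) * (1 + T * r ^ 2) - 1)) := by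
    rw [ha, hb, ← Real.sqrt_mul hA0, hABval]
  have hεT : ε * T ≤ 1 / 10 := by nlinarith [mul_le_mul_of_nonneg_left hT' hε.le]
  have hsle : Real.sqrt (ε * ((1 + r ^ 2) * (1 + T * r ^ 2) - 1)) ≤ 1 / 3 * (1 + r ^ 2) := by
    have h1 : ε * ((1 + r ^ 2) * (1 + T * r ^ 2) - 1) ≤ (1 / 3 * (1 + r ^ 2)) ^ 2 := by
      nlinarith [mul_le_mul_of_nonneg_right hεT hr2,
        mul_le_mul_of_nonneg_right hεT (mul_nonneg hr2 hr2),
        mul_le_mul_of_nonneg_right hε' hr2, mul_nonneg hr2 hr2]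
    calc Real.sqrt (ε * ((1 + r ^ 2) * (1 + T * r ^ 2) - 1))
        ≤ Real.sqrt ((1 / 3 * (1 + r ^ 2)) ^ 2) := Real.sqrt_le_sqrt h1
      _ = 1 / 3 * (1 + r ^ 2) := Real.sqrt_sq (by positivity)
  have hexp : (b - a) ^ 2 = S - 2 * (a * b) := by linear_combination ha2 + hb2
  have hS1 : 1 + r ^ 2 ≤ S := by
    rw [hS]; nlinarith [mul_nonneg (by linarith : (0:ℝ) ≤ T + ε - 1) hr2]
  have hgap : (1 + r ^ 2) / 3 ≤ (b - a) ^ 2 := by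
    rw [hexp, hab2]; linarith
  have key : Real.sqrt (1 + r ^ 2) / (4 * Real.sqrt (1 + T)) ≤ b - a := by
    apply sq_le_imp _ _ (by positivity) hd0
    have h2 : (Real.sqrt (1 + r ^ 2) / (4 * Real.sqrt (1 + T))) ^ 2
        = (1 + r ^ 2) / (16 * (1 + T)) := by
      rw [div_pow, mul_pow, Real.sq_sqrt (by positivity : (0:ℝ) ≤ 1 + r ^ 2),
        Real.sq_sqrt (by linarith : (0:ℝ) ≤ 1 + T)]
      norm_num
    rw [h2]
    have h3 : (1 + r ^ 2) / (16 * (1 + T)) ≤ (1 + r ^ 2) / 3 := by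
      rw [div_le_div_iff₀ (by linarith) (by norm_num)]
      nlinarith [mul_nonneg hr2 (by linarith : (0:ℝ) ≤ T)]
    linarith
  have hsε : (0:ℝ) < Real.sqrt ε := Real.sqrt_pos.mpr hε
  rw [Real.sqrt_mul hε.le]
  have heq : Real.sqrt (1 + r ^ 2) / (4 * (Real.sqrt ε * Real.sqrt (1 + T)))
      = (Real.sqrt ε)⁻¹ * (Real.sqrt (1 + r ^ 2) / (4 * Real.sqrt (1 + T))) := by
    field_simp
  rw [heq, show (Real.sqrt ε)⁻¹ * b - (Real.sqrt ε)⁻¹ * a = (Real.sqrt ε)⁻¹ * (b - a) by ring]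
  exact mul_le_mul_of_nonneg_left key (by positivity)
end

section
/- For every r ≥ 0 one has H_ε(r)² − λ_i(r)² > 0, and the function R(r) := √((λ_e(r)² − H_ε(r)²)/(H_ε(r)² − λ_i(r)²)) satisfies the explicit formula R(r) = 2√ε / (u(r) + √(u(r)²+4ε)). In particular R(0) = √ε and 0 < R(r) ≤ √ε/(1−ε) for all r ≥ 0. -/
open Real

/-- `R(r) = √((λ_e² − H_ε²)/(H_ε² − λ_i²))`. -/
noncomputable def Rfun (ε T r : ℝ) : ℝ :=
  Real.sqrt (((lamE ε T r) ^ 2 - (Heps ε T r) ^ 2) / ((Heps ε T r) ^ 2 - (lamI ε T r) ^ 2))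

set_option maxHeartbeats 1600000 in
/-- For every `r ≥ 0`: `H_ε(r)² − λ_i(r)² > 0` and
`R(r) = 2√ε/(u(r)+√(u(r)²+4ε))`; in particular `R(0) = √ε` and
`0 < R(r) ≤ √ε/(1−ε)`. -/
theorem stmt16 (ε T : ℝ) (hε : 0 < ε) (hε' : ε ≤ 1 / 1000) (hT : 1 ≤ T) (hT' : T ≤ 100) :
    (∀ r : ℝ, 0 ≤ r →
      0 < (Heps ε T r) ^ 2 - (lamI ε T r) ^ 2 ∧
      Rfun ε T r = 2 * Real.sqrt ε / (uu ε T r + Real.sqrt ((uu ε T r) ^ 2 + 4 * ε)) ∧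
      0 < Rfun ε T r ∧ Rfun ε T r ≤ Real.sqrt ε / (1 - ε)) ∧
    Rfun ε T 0 = Real.sqrt ε := by
  have hε1 : ε < 1 := by linarith
  have hεne : (ε : ℝ) ≠ 0 := hε.ne'
  have hsε : 0 < Real.sqrt ε := Real.sqrt_pos.mpr hε
  have hsε2 : Real.sqrt ε ^ 2 = ε := Real.sq_sqrt hε.le
  have main : ∀ r : ℝ, 0 ≤ r →
      0 < (Heps ε T r) ^ 2 - (lamI ε T r) ^ 2 ∧
      Rfun ε T r = 2 * Real.sqrt ε / (uu ε T r + Real.sqrt ((uu ε T r) ^ 2 + 4 * ε)) ∧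
      0 < Rfun ε T r ∧ Rfun ε T r ≤ Real.sqrt ε / (1 - ε) := by
    intro r hr
    obtain ⟨u, hu_def⟩ : ∃ u, uu ε T r = u := ⟨_, rfl⟩
    have hr2 : (0:ℝ) ≤ r ^ 2 := sq_nonneg r
    have hu : 1 - ε ≤ u := by
      rw [← hu_def]; unfold uu; nlinarith
    have hu0 : 0 < u := by linarith
    obtain ⟨v, hv_def⟩ : ∃ v, Real.sqrt (u ^ 2 + 4 * ε) = v := ⟨_, rfl⟩
    have hv2 : v ^ 2 = u ^ 2 + 4 * ε := by
      rw [← hv_def]; exact Real.sq_sqrt (by positivity)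
    have hv0 : 0 < v := by
      rw [← hv_def]; exact Real.sqrt_pos.mpr (by positivity)
    have hvu : u < v := by nlinarith
    have hav : v ≤ (1 + ε) + (T + ε) * r ^ 2 := by
      have hsq : v ^ 2 ≤ ((1 + ε) + (T + ε) * r ^ 2) ^ 2 := by
        have ha : (1 + ε) + (T + ε) * r ^ 2 = u + 2 * ε * (1 + r ^ 2) := by
          rw [← hu_def]; unfold uu; ring
        rw [ha, hv2]
        nlinarith [mul_le_mul_of_nonneg_right hu (by linarith : (0:ℝ) ≤ 1 + r ^ 2),
          mul_nonneg hε.le (sq_nonneg r), mul_nonneg hε.le hr2,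
          mul_nonneg (mul_nonneg hε.le hε.le) (sq_nonneg (1 + r ^ 2)),
          mul_nonneg (mul_nonneg hε.le hr2) hr2]
      have ha0 : (0:ℝ) ≤ (1 + ε) + (T + ε) * r ^ 2 := by positivity
      nlinarith [hsq, ha0, hv0]
    have hT0 : (0:ℝ) ≤ 1 + T * r ^ 2 := by nlinarith
    have hH2 : Heps ε T r ^ 2 = (1 + T * r ^ 2) / ε := by
      unfold Heps
      rw [mul_pow, inv_pow, hsε2, Real.sq_sqrt hT0]
      ring
    have hI2 : lamI ε T r ^ 2 = ((1 + ε) + (T + ε) * r ^ 2 - v) / (2 * ε) := by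
      unfold lamI
      rw [hu_def, hv_def, mul_pow, inv_pow, hsε2,
        Real.sq_sqrt (by linarith : (0:ℝ) ≤ ((1 + ε) + (T + ε) * r ^ 2 - v) / 2)]
      ring
    have hE2 : lamE ε T r ^ 2 = ((1 + ε) + (T + ε) * r ^ 2 + v) / (2 * ε) := by
      unfold lamE
      rw [hu_def, hv_def, mul_pow, inv_pow, hsε2,
        Real.sq_sqrt (by linarith : (0:ℝ) ≤ ((1 + ε) + (T + ε) * r ^ 2 + v) / 2)]
      ring
    have hdiffI : Heps ε T r ^ 2 - lamI ε T r ^ 2 = (u + v) / (2 * ε) := by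
      rw [hH2, hI2, ← hu_def]; unfold uu; field_simp; ring
    have hdiffE : lamE ε T r ^ 2 - Heps ε T r ^ 2 = (v - u) / (2 * ε) := by
      rw [hH2, hE2, ← hu_def]; unfold uu; field_simp; ring
    have huv0 : 0 < u + v := by linarith
    refine ⟨by rw [hdiffI]; positivity, ?_⟩
    have hform : Rfun ε T r = 2 * Real.sqrt ε / (u + v) := by
      have h1 : (lamE ε T r ^ 2 - Heps ε T r ^ 2) / (Heps ε T r ^ 2 - lamI ε T r ^ 2)
          = (v - u) / (v + u) := by
        rw [hdiffE, hdiffI]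
        rw [div_div_div_cancel_right₀]
        · ring_nf
        · positivity
      have hmul : (v - u) * (v + u) = 4 * ε := by nlinarith [hv2]
      have key : (v - u) / (v + u) = (2 * Real.sqrt ε / (u + v)) ^ 2 := by
        rw [div_pow, mul_pow, hsε2,
          div_eq_div_iff (by positivity : (v + u) ≠ 0) (by positivity : ((u + v) ^ 2) ≠ 0)]
        nlinarith [hmul]
      unfold Rfun
      rw [h1, key, Real.sqrt_sq (by positivity)]
    refine ⟨by rw [hu_def, hv_def, hform], ?_, ?_⟩
    · rw [hform]; positivity
    · rw [hform, div_le_div_iff₀ huv0 (by linarith : (0:ℝ) < 1 - ε)]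
      nlinarith [mul_le_mul_of_nonneg_left (show 2 * (1 - ε) ≤ u + v by linarith) hsε.le]
  refine ⟨main, ?_⟩
  obtain ⟨-, hf, -, -⟩ := main 0 le_rfl
  have hu0 : uu ε T 0 = 1 - ε := by unfold uu; ring
  have hv0 : Real.sqrt ((uu ε T 0) ^ 2 + 4 * ε) = 1 + ε := by
    rw [hu0, show (1 - ε) ^ 2 + 4 * ε = (1 + ε) ^ 2 by ring,
      Real.sqrt_sq (by linarith)]
  rw [hf, hv0, hu0]
  rw [show (1 - ε) + (1 + ε) = 2 by ring]
  field_simp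
end

section
/- For every r > 0 the derivative λ_i'(r) exists and satisfies 0 < λ_i'(r) ≤ λ_i(r)/r; consequently λ_i is strictly increasing on [0,∞) and λ_i'(r) ≤ √(1+T) for all r > 0. -/
open Real

lemma last_arith (ε T r u v : ℝ) (hε : 0 < ε) (hε' : ε ≤ 1 / 1000) (hT : 1 ≤ T) (hT' : T ≤ 100)
    (hu : u = (1 - ε) + (T - ε) * r ^ 2)
    (hv0 : 0 ≤ v) (hv2 : v ^ 2 = u ^ 2 + 4 * ε) :
    (1 + ε) + (T + ε) * r ^ 2 - 2 * ε * (1 + T) * r ^ 2 ≤ v := by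
  have hpoly : v ^ 2 - ((1 + ε) + (T + ε) * r ^ 2 - 2 * ε * (1 + T) * r ^ 2) ^ 2
      = 4 * ε ^ 2 * (1 + T) * r ^ 2 + 4 * ε * T * (T - ε * (1 + T)) * r ^ 4 := by
    rw [hv2, hu]; ring
  have h1 : 0 < T - ε * (1 + T) := by nlinarith
  have t1 : (0:ℝ) ≤ 4 * ε ^ 2 * (1 + T) * r ^ 2 := by positivity
  have t2 : (0:ℝ) ≤ 4 * ε * T * (T - ε * (1 + T)) * r ^ 4 :=
    mul_nonneg (mul_nonneg (by positivity) h1.le) (by positivity)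
  have hpos : 0 ≤ v ^ 2 - ((1 + ε) + (T + ε) * r ^ 2 - 2 * ε * (1 + T) * r ^ 2) ^ 2 := by
    rw [hpoly]; linarith
  by_cases hY : (1 + ε) + (T + ε) * r ^ 2 - 2 * ε * (1 + T) * r ^ 2 ≤ 0
  · linarith
  · push_neg at hY; nlinarith [hpos, hv0]

/-- Pure arithmetic facts about `u`, `v = √(u²+4ε)`, `A`. -/
lemma arith19 (ε T r u v : ℝ) (hε : 0 < ε) (hε' : ε ≤ 1 / 1000) (hT : 1 ≤ T) (hT' : T ≤ 100)
    (hr : 0 < r) (hu : u = (1 - ε) + (T - ε) * r ^ 2)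
    (hv0 : 0 ≤ v) (hv2 : v ^ 2 = u ^ 2 + 4 * ε) :
    0 < u ∧ u < v ∧ v < (1 + ε) + (T + ε) * r ^ 2 ∧
    2 * u * ((T - ε) * (2 * r)) < (T + ε) * (2 * r) * (2 * v) ∧
    (v - (1 + ε)) * v ≤ u * ((T - ε) * r ^ 2) := by
  have hε1 : ε < 1 := by linarith
  have hu0 : 0 < u := by rw [hu]; nlinarith [sq_nonneg r]
  have huv : u < v := by nlinarith [hv2, sq_nonneg (v - u)]
  have hvA : v < (1 + ε) + (T + ε) * r ^ 2 := by
    nlinarith [hv2, sq_nonneg r, mul_pos hr hr, sq_nonneg (v - ((1 + ε) + (T + ε) * r ^ 2)),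
      mul_pos (mul_pos hε hr) hr]
  have hderiv : 2 * u * ((T - ε) * (2 * r)) < (T + ε) * (2 * r) * (2 * v) := by
    nlinarith [mul_pos hr (sub_pos.mpr huv), mul_pos hr hu0, mul_pos hr (lt_of_lt_of_le hu0 huv.le)]
  have hXY : 0 < (1 + ε) * v + ((1 - ε) * u + 4 * ε) := by nlinarith [hu0, hv0]
  have hsq : ((1 + ε) * v) ^ 2 = ((1 - ε) * u + 4 * ε) ^ 2 + 4 * ε * (u - (1 - ε)) ^ 2 := by
    rw [show ((1+ε)*v)^2 = (1+ε)^2 * v^2 by ring, hv2]; ring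
  have key1 : (1 - ε) * u + 4 * ε ≤ (1 + ε) * v := by
    nlinarith [hsq, hXY, sq_nonneg (u - (1 - ε))]
  have key2 : (v - (1 + ε)) * v ≤ u * ((T - ε) * r ^ 2) := by
    have hid : u * ((T - ε) * r ^ 2) = u * (u - (1 - ε)) := by rw [hu]; ring
    nlinarith [key1, hv2]
  exact ⟨hu0, huv, hvA, hderiv, key2⟩

lemma key_aux_s19 (ε T : ℝ) (hε : 0 < ε) (hε' : ε ≤ 1 / 1000) (hT : 1 ≤ T) (hT' : T ≤ 100)
    {r : ℝ} (hr : 0 < r) :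
    ∃ d : ℝ, HasDerivAt (lamI ε T) d r ∧ 0 < d ∧ d ≤ lamI ε T r / r := by
  have hP : (0:ℝ) < (uu ε T r) ^ 2 + 4 * ε := by positivity
  have hv0 : (0:ℝ) ≤ Real.sqrt ((uu ε T r) ^ 2 + 4 * ε) := Real.sqrt_nonneg _
  have hv2 : (Real.sqrt ((uu ε T r) ^ 2 + 4 * ε)) ^ 2 = (uu ε T r) ^ 2 + 4 * ε :=
    Real.sq_sqrt hP.le
  obtain ⟨hu0, huv, hvA, hderiv, key2⟩ :=
    arith19 ε T r (uu ε T r) (Real.sqrt ((uu ε T r) ^ 2 + 4 * ε)) hε hε' hT hT' hr rfl hv0 hv2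
  have hvpos : 0 < Real.sqrt ((uu ε T r) ^ 2 + 4 * ε) := lt_trans hu0 huv
  have hg : 0 < ((1 + ε) + (T + ε) * r ^ 2 - Real.sqrt ((uu ε T r) ^ 2 + 4 * ε)) / 2 := by
    linarith
  have hs0 : 0 < Real.sqrt (((1 + ε) + (T + ε) * r ^ 2 - Real.sqrt ((uu ε T r) ^ 2 + 4 * ε)) / 2) :=
    Real.sqrt_pos.mpr hg
  have hs2 : (Real.sqrt (((1 + ε) + (T + ε) * r ^ 2 - Real.sqrt ((uu ε T r) ^ 2 + 4 * ε)) / 2)) ^ 2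
      = ((1 + ε) + (T + ε) * r ^ 2 - Real.sqrt ((uu ε T r) ^ 2 + 4 * ε)) / 2 := Real.sq_sqrt hg.le
  -- derivative chain
  have hdu : HasDerivAt (fun x => uu ε T x) ((T - ε) * (2 * r)) r := by
    unfold uu
    simpa using ((hasDerivAt_pow 2 r).const_mul (T - ε)).const_add (1 - ε)
  have hdP : HasDerivAt (fun x => (uu ε T x) ^ 2 + 4 * ε) (2 * uu ε T r * ((T - ε) * (2 * r))) r := by
    have h := (hdu.pow 2).add_const (4 * ε)
    exact h.congr_deriv (by norm_num)
  have hdv : HasDerivAt (fun x => Real.sqrt ((uu ε T x) ^ 2 + 4 * ε))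
      ((2 * uu ε T r * ((T - ε) * (2 * r))) / (2 * Real.sqrt ((uu ε T r) ^ 2 + 4 * ε))) r :=
    hdP.sqrt hP.ne'
  have hdg : HasDerivAt
      (fun x => ((1 + ε) + (T + ε) * x ^ 2 - Real.sqrt ((uu ε T x) ^ 2 + 4 * ε)) / 2)
      (((T + ε) * (2 * r) - (2 * uu ε T r * ((T - ε) * (2 * r))) /
        (2 * Real.sqrt ((uu ε T r) ^ 2 + 4 * ε))) / 2) r := by
    have h1 : HasDerivAt (fun x : ℝ => (1 + ε) + (T + ε) * x ^ 2) ((T + ε) * (2 * r)) r := by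
      have := ((hasDerivAt_pow 2 r).const_mul (T + ε)).const_add (1 + ε)
      exact this.congr_deriv (by norm_num)
    exact (h1.sub hdv).div_const 2
  have hdl : HasDerivAt (lamI ε T)
      ((Real.sqrt ε)⁻¹ * ((((T + ε) * (2 * r) - (2 * uu ε T r * ((T - ε) * (2 * r))) /
        (2 * Real.sqrt ((uu ε T r) ^ 2 + 4 * ε))) / 2) /
        (2 * Real.sqrt (((1 + ε) + (T + ε) * r ^ 2 - Real.sqrt ((uu ε T r) ^ 2 + 4 * ε)) / 2)))) r := by
    have h := (hdg.sqrt hg.ne').const_mul (Real.sqrt ε)⁻¹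
    exact h
  have hc : (0:ℝ) < (Real.sqrt ε)⁻¹ := by
    simp only [inv_pos]
    exact Real.sqrt_pos.mpr hε
  have hg'pos : 0 < ((T + ε) * (2 * r) - (2 * uu ε T r * ((T - ε) * (2 * r))) /
      (2 * Real.sqrt ((uu ε T r) ^ 2 + 4 * ε))) / 2 := by
    have hlt : (2 * uu ε T r * ((T - ε) * (2 * r))) / (2 * Real.sqrt ((uu ε T r) ^ 2 + 4 * ε))
        < (T + ε) * (2 * r) := by
      rw [div_lt_iff₀ (by positivity)]
      exact hderiv
    linarith
  refine ⟨_, hdl, by positivity, ?_⟩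
  have hlam : lamI ε T r = (Real.sqrt ε)⁻¹ *
      Real.sqrt (((1 + ε) + (T + ε) * r ^ 2 - Real.sqrt ((uu ε T r) ^ 2 + 4 * ε)) / 2) := rfl
  rw [hlam]
  conv_rhs => rw [mul_div_assoc]
  apply mul_le_mul_of_nonneg_left _ hc.le
  rw [div_le_div_iff₀ (by positivity) hr]
  have hmain : (((T + ε) * (2 * r) - (2 * uu ε T r * ((T - ε) * (2 * r))) /
      (2 * Real.sqrt ((uu ε T r) ^ 2 + 4 * ε))) / 2) * r
      ≤ (1 + ε) + (T + ε) * r ^ 2 - Real.sqrt ((uu ε T r) ^ 2 + 4 * ε) := by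
    have hrw : (((T + ε) * (2 * r) - (2 * uu ε T r * ((T - ε) * (2 * r))) /
        (2 * Real.sqrt ((uu ε T r) ^ 2 + 4 * ε))) / 2) * r
        = (T + ε) * r ^ 2 - uu ε T r * ((T - ε) * r ^ 2) / Real.sqrt ((uu ε T r) ^ 2 + 4 * ε) := by
      field_simp
    have h3 : Real.sqrt ((uu ε T r) ^ 2 + 4 * ε) - (1 + ε)
        ≤ uu ε T r * ((T - ε) * r ^ 2) / Real.sqrt ((uu ε T r) ^ 2 + 4 * ε) := by
      rw [le_div_iff₀ hvpos]
      exact key2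
    rw [hrw]; linarith
  nlinarith [hmain, hs2]

lemma lamI_le19 (ε T : ℝ) (hε : 0 < ε) (hε' : ε ≤ 1 / 1000) (hT : 1 ≤ T) (hT' : T ≤ 100)
    {r : ℝ} (hr : 0 ≤ r) : lamI ε T r ≤ r * Real.sqrt (1 + T) := by
  have hP : (0:ℝ) < (uu ε T r) ^ 2 + 4 * ε := by positivity
  have hv0 : (0:ℝ) ≤ Real.sqrt ((uu ε T r) ^ 2 + 4 * ε) := Real.sqrt_nonneg _
  have hv2 : (Real.sqrt ((uu ε T r) ^ 2 + 4 * ε)) ^ 2 = (uu ε T r) ^ 2 + 4 * ε :=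
    Real.sq_sqrt hP.le
  have hAB := last_arith ε T r (uu ε T r) (Real.sqrt ((uu ε T r) ^ 2 + 4 * ε))
    hε hε' hT hT' rfl hv0 hv2
  have hg : ((1 + ε) + (T + ε) * r ^ 2 - Real.sqrt ((uu ε T r) ^ 2 + 4 * ε)) / 2
      ≤ ε * ((1 + T) * r ^ 2) := by nlinarith [hAB]
  have hlam : lamI ε T r = (Real.sqrt ε)⁻¹ *
      Real.sqrt (((1 + ε) + (T + ε) * r ^ 2 - Real.sqrt ((uu ε T r) ^ 2 + 4 * ε)) / 2) := rfl
  rw [hlam]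
  calc (Real.sqrt ε)⁻¹ *
      Real.sqrt (((1 + ε) + (T + ε) * r ^ 2 - Real.sqrt ((uu ε T r) ^ 2 + 4 * ε)) / 2)
      ≤ (Real.sqrt ε)⁻¹ * Real.sqrt (ε * ((1 + T) * r ^ 2)) := by
        apply mul_le_mul_of_nonneg_left (Real.sqrt_le_sqrt hg) (by positivity)
    _ = r * Real.sqrt (1 + T) := by
        rw [Real.sqrt_mul hε.le, Real.sqrt_mul (by linarith : (0:ℝ) ≤ 1 + T), Real.sqrt_sq hr,
          ← mul_assoc, inv_mul_cancel₀ (by positivity), one_mul, mul_comm]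

/-- For every `r > 0` the derivative `λ_i'(r)` exists with `0 < λ_i'(r) ≤ λ_i(r)/r`;
consequently `λ_i` is strictly increasing on `[0,∞)` and `λ_i'(r) ≤ √(1+T)`. -/
theorem stmt19 (ε T : ℝ) (hε : 0 < ε) (hε' : ε ≤ 1 / 1000) (hT : 1 ≤ T) (hT' : T ≤ 100) :
    (∀ r : ℝ, 0 < r → ∃ d : ℝ, HasDerivAt (lamI ε T) d r ∧ 0 < d ∧ d ≤ lamI ε T r / r) ∧
    StrictMonoOn (lamI ε T) (Set.Ici 0) ∧
    (∀ r : ℝ, 0 < r → deriv (lamI ε T) r ≤ Real.sqrt (1 + T)) := by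
  have hcont : Continuous (lamI ε T) := by
    unfold lamI uu
    fun_prop
  refine ⟨fun r hr => key_aux_s19 ε T hε hε' hT hT' hr, ?_, ?_⟩
  · apply strictMonoOn_of_deriv_pos (convex_Ici 0) hcont.continuousOn
    intro x hx
    rw [interior_Ici] at hx
    obtain ⟨d, hd, hd0, -⟩ := key_aux_s19 ε T hε hε' hT hT' hx
    rwa [hd.deriv]
  · intro r hr
    obtain ⟨d, hd, hd0, hdle⟩ := key_aux_s19 ε T hε hε' hT hT' hr
    rw [hd.deriv]
    have hle := lamI_le19 ε T hε hε' hT hT' hr.le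
    calc d ≤ lamI ε T r / r := hdle
      _ ≤ Real.sqrt (1 + T) := by
          rw [div_le_iff₀ hr]
          linarith [hle]
end
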